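/- arXiv:2510.02082 — 6 statements merged into one kernel-verified Lean document; each statement's English description precedes it below -/
import Mathlib

section
/- For every real μ > 0, the series whose terms are 1/( (a² + μ²·b²)·(c² + μ²·d²)·((a+c)² + μ²·(b+d)²) ), summed over all quadruples (a,b,c,d) of nonnegative integers with a ≥ b, c ≥ d and a·d − b·c = 1, converges and its sum equals (1/(4μ²))·( 2·arctan(μ)/μ − 2/(1 + μ²) ). -/
/-- Quadruples `(a,b,c,d)` of integers with `a ≥ b ≥ 0`, `c ≥ d ≥ 0` and `a·d − b·c = 1`. -/
def T : Set (ℤ × ℤ × ℤ × ℤ) :=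
  {p | p.2.1 ≤ p.1 ∧ 0 ≤ p.2.1 ∧ p.2.2.2 ≤ p.2.2.1 ∧ 0 ≤ p.2.2.2 ∧
    p.1 * p.2.2.2 - p.2.1 * p.2.2.1 = 1}

namespace SB
open Real

def step (m : Bool) (p : ℤ × ℤ × ℤ × ℤ) : ℤ × ℤ × ℤ × ℤ :=
  if m then (p.1, p.2.1, p.1 + p.2.2.1, p.2.1 + p.2.2.2)
  else (p.1 + p.2.2.1, p.2.1 + p.2.2.2, p.2.2.1, p.2.2.2)

def NN : (ℤ × ℤ × ℤ × ℤ) → List Bool → (ℤ × ℤ × ℤ × ℤ)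
  | p, [] => p
  | p, m :: l => NN (step m p) l

def root : ℤ × ℤ × ℤ × ℤ := (1, 0, 1, 1)

lemma memT_iff (a b c d : ℤ) : (a,b,c,d) ∈ T ↔
    (b ≤ a ∧ 0 ≤ b ∧ d ≤ c ∧ 0 ≤ d ∧ a * d - b * c = 1) := Iff.rfl

lemma root_mem : root ∈ T := by rw [root, memT_iff]; omega

lemma step_true (a b c d : ℤ) : step true (a,b,c,d) = (a,b,a+c,b+d) := rfl
lemma step_false (a b c d : ℤ) : step false (a,b,c,d) = (a+c,b+d,c,d) := rfl

lemma step_mem {p : ℤ × ℤ × ℤ × ℤ} (hp : p ∈ T) (m : Bool) : step m p ∈ T := by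
  obtain ⟨a, b, c, d⟩ := p
  obtain ⟨h1, h2, h3, h4, h5⟩ := (memT_iff a b c d).1 hp
  cases m
  · rw [step_false, memT_iff]
    refine ⟨by omega, by omega, by omega, by omega, by ring_nf; ring_nf at h5; linarith⟩
  · rw [step_true, memT_iff]
    refine ⟨by omega, by omega, by omega, by omega, by ring_nf; ring_nf at h5; linarith⟩

lemma NN_mem {p : ℤ × ℤ × ℤ × ℤ} (hp : p ∈ T) (l : List Bool) : NN p l ∈ T := by
  induction l generalizing p with
  | nil => exact hp
  | cons m l ih => exact ih (step_mem hp m)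

lemma one_le_a {p : ℤ × ℤ × ℤ × ℤ} (hp : p ∈ T) : 1 ≤ p.1 ∧ 1 ≤ p.2.2.1 := by
  obtain ⟨a, b, c, d⟩ := p
  obtain ⟨h1, h2, h3, h4, h5⟩ := (memT_iff a b c d).1 hp
  simp only
  constructor
  · by_contra h
    have ha : a = 0 := by omega
    have hb : b = 0 := by omega
    rw [ha, hb] at h5; simp at h5
  · by_contra h
    have hc : c = 0 := by omega
    have hd : d = 0 := by omega
    rw [hc, hd] at h5; simp at h5

lemma parent {p : ℤ × ℤ × ℤ × ℤ} (hp : p ∈ T) (hne : p ≠ root) :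
    ∃ q ∈ T, ∃ m, step m q = p ∧ q.1 + q.2.2.1 < p.1 + p.2.2.1 := by
  obtain ⟨a, b, c, d⟩ := p
  have ha : 1 ≤ a := (one_le_a hp).1
  have hc : 1 ≤ c := (one_le_a hp).2
  obtain ⟨h1, h2, h3, h4, h5⟩ := (memT_iff a b c d).1 hp
  rcases lt_trichotomy a c with h | h | h
  · -- c > a : parent (a, b, c-a, d-b), move true
    have hdb : 1 ≤ d - b := by nlinarith
    have hcd : d - b ≤ c - a := by
      by_contra hx
      push_neg at hx
      nlinarith [mul_nonneg (sub_nonneg.2 h1) (by linarith : (0:ℤ) ≤ c - a - 1),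
        mul_nonneg h2 (by linarith : (0:ℤ) ≤ c - a)]
    refine ⟨(a, b, c - a, d - b),
      (memT_iff _ _ _ _).2 ⟨h1, h2, hcd, by omega, by ring_nf; ring_nf at h5; linarith⟩,
      true, ?_, by simp only; omega⟩
    rw [step_true]
    simp only [Prod.mk.injEq, true_and, and_true]
    exact ⟨by omega, by omega⟩
  · -- a = c : must be root
    exfalso
    have h9 : a * (d - b) = 1 := by subst h; ring_nf; ring_nf at h5; linarith
    have h10 : 1 ≤ d - b := by nlinarith
    have h11 : a = 1 := by nlinarith
    apply hne
    simp only [root, Prod.mk.injEq]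
    subst h
    refine ⟨h11, by nlinarith, by omega, by nlinarith⟩
  · -- a > c : parent (a-c, b-d, c, d), move false
    have hbd : 0 ≤ b - d := by
      by_contra hx
      push_neg at hx
      nlinarith [mul_nonneg h4 (by linarith : (0:ℤ) ≤ a - c),
        mul_pos (by linarith : (0:ℤ) < c) (by linarith : (0:ℤ) < d - b)]
    have hab : b - d ≤ a - c := by
      by_contra hx
      push_neg at hx
      nlinarith [mul_nonneg h4 (by linarith : (0:ℤ) ≤ a - c),
        mul_nonneg (by linarith : (0:ℤ) ≤ c) (by linarith : (0:ℤ) ≤ b - d - (a - c))]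
    refine ⟨(a - c, b - d, c, d),
      (memT_iff _ _ _ _).2 ⟨hab, hbd, h3, h4, by ring_nf; ring_nf at h5; linarith⟩,
      false, ?_, by simp only; omega⟩
    rw [step_false]
    simp only [Prod.mk.injEq, true_and, and_true]
    exact ⟨by omega, by omega⟩


lemma NN_append (l : List Bool) (m : Bool) (p : ℤ × ℤ × ℤ × ℤ) :
    NN p (l ++ [m]) = step m (NN p l) := by
  induction l generalizing p with
  | nil => rfl
  | cons m' l ih => exact ih (step m' p)

lemma reach_aux : ∀ n : ℕ, ∀ p ∈ T, (p.1 + p.2.2.1).toNat = n → ∃ l, NN root l = p := by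
  intro n
  induction n using Nat.strong_induction_on with
  | _ n ih =>
    intro p hp hn
    by_cases hroot : p = root
    · exact ⟨[], hroot.symm⟩
    · obtain ⟨q, hq, m, hstep, hlt⟩ := parent hp hroot
      have h1 : 1 ≤ q.1 + q.2.2.1 := by
        have := one_le_a hq; omega
      obtain ⟨l, hl⟩ := ih (q.1 + q.2.2.1).toNat (by omega) q hq rfl
      exact ⟨l ++ [m], by rw [NN_append, hl, hstep]⟩

lemma reach {p : ℤ × ℤ × ℤ × ℤ} (hp : p ∈ T) : ∃ l, NN root l = p :=
  reach_aux _ p hp rfl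

/-- determinant of the `u`-vector of `p` against `(w1, w2)` -/
def D1 (p : ℤ × ℤ × ℤ × ℤ) (w1 w2 : ℤ) : ℤ := p.1 * w2 - p.2.1 * w1
/-- determinant of the `v`-vector of `p` against `(w1, w2)` -/
def D2 (p : ℤ × ℤ × ℤ × ℤ) (w1 w2 : ℤ) : ℤ := p.2.2.1 * w2 - p.2.2.2 * w1

lemma inv_pos (w1 w2 : ℤ) : ∀ (l : List Bool) (p : ℤ × ℤ × ℤ × ℤ),
    1 ≤ D1 p w1 w2 → 0 ≤ D2 p w1 w2 → 1 ≤ D1 (NN p l) w1 w2 := by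
  intro l
  induction l with
  | nil => intro p h1 _; exact h1
  | cons m l ih =>
    intro p h1 h2
    cases m
    · refine ih _ ?_ ?_ <;> · obtain ⟨a,b,c,d⟩ := p
                              simp only [D1, D2, step_false] at *
                              nlinarith
    · refine ih _ ?_ ?_ <;> · obtain ⟨a,b,c,d⟩ := p
                              simp only [D1, D2, step_true] at *
                              nlinarith

lemma inv_neg (w1 w2 : ℤ) : ∀ (l : List Bool) (p : ℤ × ℤ × ℤ × ℤ),
    D1 p w1 w2 ≤ 0 → D2 p w1 w2 ≤ -1 → D1 (NN p l) w1 w2 ≤ 0 := by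
  intro l
  induction l with
  | nil => intro p h1 _; exact h1
  | cons m l ih =>
    intro p h1 h2
    cases m
    · refine ih _ ?_ ?_ <;> · obtain ⟨a,b,c,d⟩ := p
                              simp only [D1, D2, step_false] at *
                              nlinarith
    · refine ih _ ?_ ?_ <;> · obtain ⟨a,b,c,d⟩ := p
                              simp only [D1, D2, step_true] at *
                              nlinarith

lemma meas_le : ∀ (l : List Bool) (p : ℤ × ℤ × ℤ × ℤ), p ∈ T →
    p.1 + p.2.2.1 ≤ (NN p l).1 + (NN p l).2.2.1 := by
  intro l
  induction l with
  | nil => intro p _; exact le_refl _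
  | cons m l ih =>
    intro p hp
    refine le_trans ?_ (ih (step m p) (step_mem hp m))
    have := one_le_a hp
    obtain ⟨a,b,c,d⟩ := p
    cases m
    · rw [step_false]; simp only at *; omega
    · rw [step_true]; simp only at *; omega

lemma no_fix (m : Bool) (l : List Bool) {p : ℤ × ℤ × ℤ × ℤ} (hp : p ∈ T) :
    NN (step m p) l ≠ p := by
  intro h
  have h1 := meas_le l (step m p) (step_mem hp m)
  rw [h] at h1
  have := one_le_a hp
  obtain ⟨a,b,c,d⟩ := p
  cases m
  · rw [step_false] at h1; simp only at *; omega
  · rw [step_true] at h1; simp only at *; omega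

lemma NN_inj : ∀ (l l' : List Bool) (p : ℤ × ℤ × ℤ × ℤ), p ∈ T →
    NN p l = NN p l' → l = l' := by
  intro l
  induction l with
  | nil =>
    intro l' p hp h
    cases l' with
    | nil => rfl
    | cons m' l' => exact absurd h.symm (no_fix m' l' hp)
  | cons m l ih =>
    intro l' p hp h
    cases l' with
    | nil => exact absurd h (no_fix m l hp)
    | cons m' l' =>
      have hsame : m = m' := by
        by_contra hmm
        obtain ⟨a,b,c,d⟩ := p
        obtain ⟨h1, h2, h3, h4, h5⟩ := (memT_iff a b c d).1 hp
        -- the common value lies in both subtrees; contradiction via determinants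
        have key1 : ∀ l₀ : List Bool, 1 ≤ D1 (NN (step true (a,b,c,d)) l₀) (a+c) (b+d) := by
          intro l₀
          refine inv_pos _ _ l₀ _ ?_ ?_ <;>
            simp only [D1, D2, step_true] <;> nlinarith
        have key2 : ∀ l₀ : List Bool, D1 (NN (step false (a,b,c,d)) l₀) (a+c) (b+d) ≤ 0 := by
          intro l₀
          refine inv_neg _ _ l₀ _ ?_ ?_ <;>
            simp only [D1, D2, step_false] <;> nlinarith
        cases m <;> cases m'
        · exact hmm rfl
        · simp only [NN] at h
          have ha := key2 l; rw [h] at ha; have hb := key1 l'; omega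
        · simp only [NN] at h
          have ha := key1 l; rw [h] at ha; have hb := key2 l'; omega
        · exact hmm rfl
      subst hsame
      have : l = l' := ih l' (step m p) (step_mem hp m) h
      rw [this]



noncomputable def gg (μ s : ℝ) : ℝ :=
  arctan (μ / s) / (2 * μ ^ 3) - s / (2 * μ ^ 2 * (s ^ 2 + μ ^ 2))

lemma my_arctan_nonneg {x : ℝ} (hx : 0 ≤ x) : 0 ≤ arctan x := by
  rw [← Real.arctan_zero]
  exact Real.arctan_strictMono.monotone hx

lemma arctan_lb {x : ℝ} (hx : 0 ≤ x) : x / (1 + x ^ 2) ≤ arctan x := by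
  have h0 : 0 ≤ arctan x := my_arctan_nonneg hx
  have hs := Real.sin_le (by linarith : 0 ≤ 2 * arctan x)
  rw [Real.sin_two_mul, Real.sin_arctan, Real.cos_arctan] at hs
  have hss : Real.sqrt (1 + x ^ 2) * Real.sqrt (1 + x ^ 2) = 1 + x ^ 2 :=
    Real.mul_self_sqrt (by positivity)
  have key : 2 * (x / Real.sqrt (1 + x ^ 2)) * (1 / Real.sqrt (1 + x ^ 2))
      = 2 * (x / (Real.sqrt (1 + x ^ 2) * Real.sqrt (1 + x ^ 2))) := by ring
  rw [key, hss] at hs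
  linarith

lemma arctan_ub {x : ℝ} (hx : 0 ≤ x) : arctan x ≤ x := by
  have := Real.le_tan (my_arctan_nonneg hx) (Real.arctan_lt_pi_div_two x)
  rwa [Real.tan_arctan] at this

lemma gg_eq {μ s : ℝ} (hμ : 0 < μ) (hs : 0 < s) :
    gg μ s = (arctan (μ / s) - (μ / s) / (1 + (μ / s) ^ 2)) / (2 * μ ^ 3) := by
  have h : (μ / s) / (1 + (μ / s) ^ 2) / (2 * μ ^ 3) = s / (2 * μ ^ 2 * (s ^ 2 + μ ^ 2)) := by
    rw [div_div, div_eq_div_iff (by positivity) (by positivity)]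
    field_simp
  rw [gg, ← h]
  ring

lemma gg_nonneg {μ s : ℝ} (hμ : 0 < μ) (hs : 0 < s) : 0 ≤ gg μ s := by
  rw [gg_eq hμ hs]
  have h := arctan_lb (x := μ / s) (by positivity)
  apply div_nonneg (by linarith) (by positivity)

lemma gg_le {μ s : ℝ} (hμ : 0 < μ) (hs : 0 < s) :
    gg μ s ≤ (μ / s) ^ 2 * arctan (μ / s) / (2 * μ ^ 3) := by
  rw [gg_eq hμ hs]
  set x := μ / s with hxdef
  have hx0 : 0 < x := by rw [hxdef]; positivity
  have h1 := arctan_lb (x := x) hx0.le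
  have h2 := arctan_ub (x := x) hx0.le
  rw [div_le_div_iff_of_pos_right (by positivity)]
  have e : x - x / (1 + x ^ 2) = x ^ 2 * (x / (1 + x ^ 2)) := by
    field_simp
    ring
  have h3 := mul_le_mul_of_nonneg_left h1 (sq_nonneg x)
  linarith

lemma arctan_split {μ s qu qv : ℝ} (hμ : 0 < μ) (hs : 0 < s) (hu : 0 < qu) (hv : 0 < qv)
    (hQQ : qu * qv = s ^ 2 + μ ^ 2) :
    arctan (μ / s) = arctan (μ / (s + qu)) + arctan (μ / (s + qv)) := by
  have hh : (μ / (s + qu)) * (μ / (s + qv)) < 1 := by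
    rw [div_mul_div_comm, div_lt_one (by positivity)]
    nlinarith
  rw [Real.arctan_add hh]
  congr 1
  have hxy : (0:ℝ) < 1 - μ / (s + qu) * (μ / (s + qv)) := by linarith
  rw [div_eq_div_iff hs.ne' hxy.ne']
  field_simp
  ring_nf
  linear_combination hQQ

lemma rat_id {μ s qu qv : ℝ} (hμ : 0 < μ) (hs : 0 < s) (hu : 0 < qu) (hv : 0 < qv)
    (hQQ : qu * qv = s ^ 2 + μ ^ 2) :
    1 / (qu * qv * (qu + qv + 2 * s)) =
      (s + qu) / (2 * μ ^ 2 * ((s + qu) ^ 2 + μ ^ 2))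
        + (s + qv) / (2 * μ ^ 2 * ((s + qv) ^ 2 + μ ^ 2))
        - s / (2 * μ ^ 2 * (s ^ 2 + μ ^ 2)) := by
  have e0 : s ^ 2 + μ ^ 2 = qu * qv := hQQ.symm
  have e1 : (s + qu) ^ 2 + μ ^ 2 = qu * (qu + qv + 2 * s) := by linear_combination -hQQ
  have e2 : (s + qv) ^ 2 + μ ^ 2 = qv * (qu + qv + 2 * s) := by linear_combination -hQQ
  have hk : μ ^ 2 = qu * qv - s ^ 2 := by linarith
  have hx : 0 < qu * qv - s ^ 2 := by rw [← hk]; positivity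
  rw [e0, e1, e2, hk]
  have hw : 0 < qu + qv + 2 * s := by linarith
  field_simp
  ring
noncomputable def FF (μ : ℝ) (p : ℤ × ℤ × ℤ × ℤ) : ℝ :=
  1 / (((p.1 : ℝ) ^ 2 + μ ^ 2 * (p.2.1 : ℝ) ^ 2) *
    ((p.2.2.1 : ℝ) ^ 2 + μ ^ 2 * (p.2.2.2 : ℝ) ^ 2) *
    (((p.1 : ℝ) + (p.2.2.1 : ℝ)) ^ 2 + μ ^ 2 * ((p.2.1 : ℝ) + (p.2.2.2 : ℝ)) ^ 2))

noncomputable def sV (μ : ℝ) (p : ℤ × ℤ × ℤ × ℤ) : ℝ :=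
  (p.1 : ℝ) * (p.2.2.1 : ℝ) + μ ^ 2 * (p.2.1 : ℝ) * (p.2.2.2 : ℝ)

noncomputable def Q1 (μ : ℝ) (p : ℤ × ℤ × ℤ × ℤ) : ℝ := (p.1 : ℝ) ^ 2 + μ ^ 2 * (p.2.1 : ℝ) ^ 2
noncomputable def Q2 (μ : ℝ) (p : ℤ × ℤ × ℤ × ℤ) : ℝ :=
  (p.2.2.1 : ℝ) ^ 2 + μ ^ 2 * (p.2.2.2 : ℝ) ^ 2

lemma FF_nonneg (μ : ℝ) (p : ℤ × ℤ × ℤ × ℤ) : 0 ≤ FF μ p := by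
  rw [FF]
  exact one_div_nonneg.2 (by positivity)

lemma q1_pos {μ : ℝ} {p : ℤ × ℤ × ℤ × ℤ} (hp : p ∈ T) : 0 < Q1 μ p := by
  have h := (one_le_a hp).1
  have : (1 : ℝ) ≤ (p.1 : ℝ) := by exact_mod_cast h
  rw [Q1]; nlinarith [sq_nonneg (μ * (p.2.1 : ℝ))]

lemma q2_pos {μ : ℝ} {p : ℤ × ℤ × ℤ × ℤ} (hp : p ∈ T) : 0 < Q2 μ p := by
  have h := (one_le_a hp).2
  have : (1 : ℝ) ≤ (p.2.2.1 : ℝ) := by exact_mod_cast h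
  rw [Q2]; nlinarith [sq_nonneg (μ * (p.2.2.2 : ℝ))]

lemma one_le_sV {μ : ℝ} (hμ : 0 < μ) {p : ℤ × ℤ × ℤ × ℤ} (hp : p ∈ T) : 1 ≤ sV μ p := by
  obtain ⟨a, b, c, d⟩ := p
  obtain ⟨h1, h2, h3, h4, h5⟩ := (memT_iff a b c d).1 hp
  have ha : 1 ≤ a := (one_le_a hp).1
  have hc : 1 ≤ c := (one_le_a hp).2
  have hac : (1 : ℝ) ≤ (a : ℝ) * (c : ℝ) := by exact_mod_cast one_le_mul_of_one_le_of_one_le (by exact_mod_cast ha) (by exact_mod_cast hc)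
  have hbd : (0 : ℝ) ≤ (b : ℝ) * (d : ℝ) := by exact_mod_cast mul_nonneg h2 h4
  rw [sV]
  nlinarith [sq_nonneg μ]

lemma sv_pos {μ : ℝ} (hμ : 0 < μ) {p : ℤ × ℤ × ℤ × ℤ} (hp : p ∈ T) : 0 < sV μ p :=
  lt_of_lt_of_le one_pos (one_le_sV hμ hp)

lemma QQ_mul {μ : ℝ} {p : ℤ × ℤ × ℤ × ℤ} (hp : p ∈ T) :
    Q1 μ p * Q2 μ p = (sV μ p) ^ 2 + μ ^ 2 := by
  obtain ⟨a, b, c, d⟩ := p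
  obtain ⟨h1, h2, h3, h4, h5⟩ := (memT_iff a b c d).1 hp
  have h5' : (a : ℝ) * (d : ℝ) - (b : ℝ) * (c : ℝ) = 1 := by exact_mod_cast h5
  rw [Q1, Q2, sV]
  simp only
  linear_combination (μ ^ 2 * ((a:ℝ) * d - b * c) + μ ^ 2) * h5'

lemma sv_true (μ : ℝ) (p : ℤ × ℤ × ℤ × ℤ) : sV μ (step true p) = sV μ p + Q1 μ p := by
  obtain ⟨a, b, c, d⟩ := p
  rw [step_true, sV, sV, Q1]
  push_cast
  ring

lemma sv_false (μ : ℝ) (p : ℤ × ℤ × ℤ × ℤ) : sV μ (step false p) = sV μ p + Q2 μ p := by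
  obtain ⟨a, b, c, d⟩ := p
  rw [step_false, sV, sV, Q2]
  push_cast
  ring

lemma FF_eq (μ : ℝ) (p : ℤ × ℤ × ℤ × ℤ) :
    FF μ p = 1 / (Q1 μ p * Q2 μ p * (Q1 μ p + Q2 μ p + 2 * sV μ p)) := by
  obtain ⟨a, b, c, d⟩ := p
  rw [FF, Q1, Q2, sV]
  congr 1
  push_cast
  ring

lemma node_arctan {μ : ℝ} (hμ : 0 < μ) {p : ℤ × ℤ × ℤ × ℤ} (hp : p ∈ T) :
    Real.arctan (μ / sV μ p) =
      Real.arctan (μ / sV μ (step true p)) + Real.arctan (μ / sV μ (step false p)) := by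
  rw [sv_true, sv_false]
  exact arctan_split hμ (sv_pos hμ hp) (q1_pos hp) (q2_pos hp) (QQ_mul hp)

lemma node_key {μ : ℝ} (hμ : 0 < μ) {p : ℤ × ℤ × ℤ × ℤ} (hp : p ∈ T) :
    FF μ p + gg μ (sV μ (step true p)) + gg μ (sV μ (step false p)) = gg μ (sV μ p) := by
  have h1 := rat_id hμ (sv_pos hμ hp) (q1_pos hp) (q2_pos hp) (QQ_mul hp)
  have h2 := arctan_split hμ (sv_pos hμ hp) (q1_pos hp) (q2_pos hp) (QQ_mul hp)
  rw [FF_eq, sv_true, sv_false, gg, gg, gg]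
  rw [h2]
  linear_combination h1
def An : ℕ → Finset (List Bool)
  | 0 => ∅
  | n + 1 => insert [] ((An n).image (List.cons true) ∪ (An n).image (List.cons false))

def Bn : ℕ → Finset (List Bool)
  | 0 => {[]}
  | n + 1 => (Bn n).image (List.cons true) ∪ (Bn n).image (List.cons false)

lemma cons_inj (m : Bool) : Function.Injective (List.cons m) := by
  intro x y h; simpa using h

lemma sum_B_split (φ : (ℤ × ℤ × ℤ × ℤ) → ℝ) (n : ℕ) (p : ℤ × ℤ × ℤ × ℤ) :
    ∑ l ∈ Bn (n + 1), φ (NN p l) =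
      (∑ l ∈ Bn n, φ (NN (step true p) l)) + ∑ l ∈ Bn n, φ (NN (step false p) l) := by
  rw [show Bn (n+1) = (Bn n).image (List.cons true) ∪ (Bn n).image (List.cons false) from rfl]
  rw [Finset.sum_union ?disj]
  case disj =>
    rw [Finset.disjoint_left]
    rintro x hx hy
    obtain ⟨u, -, rfl⟩ := Finset.mem_image.1 hx
    obtain ⟨v, -, hv⟩ := Finset.mem_image.1 hy
    simp at hv
  rw [Finset.sum_image (fun x _ y _ h => cons_inj true h),
    Finset.sum_image (fun x _ y _ h => cons_inj false h)]
  rfl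

lemma sum_A_split (φ : (ℤ × ℤ × ℤ × ℤ) → ℝ) (n : ℕ) (p : ℤ × ℤ × ℤ × ℤ) :
    ∑ l ∈ An (n + 1), φ (NN p l) =
      φ p + ((∑ l ∈ An n, φ (NN (step true p) l)) + ∑ l ∈ An n, φ (NN (step false p) l)) := by
  rw [show An (n+1) = insert [] ((An n).image (List.cons true) ∪ (An n).image (List.cons false))
    from rfl]
  rw [Finset.sum_insert ?notmem]
  case notmem => simp
  congr 1
  rw [Finset.sum_union ?disj]
  case disj =>
    rw [Finset.disjoint_left]
    rintro x hx hy
    obtain ⟨u, -, rfl⟩ := Finset.mem_image.1 hx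
    obtain ⟨v, -, hv⟩ := Finset.mem_image.1 hy
    simp at hv
  rw [Finset.sum_image (fun x _ y _ h => cons_inj true h),
    Finset.sum_image (fun x _ y _ h => cons_inj false h)]
  rfl

lemma mem_An {l : List Bool} : ∀ {n : ℕ}, l.length < n → l ∈ An n := by
  induction l with
  | nil =>
    intro n hn
    match n, hn with
    | n + 1, _ => exact Finset.mem_insert_self _ _
  | cons m l ih =>
    intro n hn
    match n, hn with
    | n + 1, hn =>
      have hl : l ∈ An n := ih (by simpa using hn)
      apply Finset.mem_insert_of_mem
      rw [Finset.mem_union]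
      cases m
      · exact Or.inr (Finset.mem_image_of_mem _ hl)
      · exact Or.inl (Finset.mem_image_of_mem _ hl)

lemma len_Bn : ∀ {n : ℕ} {l : List Bool}, l ∈ Bn n → l.length = n := by
  intro n
  induction n with
  | zero => intro l hl; simp [Bn] at hl; simp [hl]
  | succ n ih =>
    intro l hl
    rw [show Bn (n+1) = (Bn n).image (List.cons true) ∪ (Bn n).image (List.cons false) from rfl,
      Finset.mem_union] at hl
    rcases hl with h | h <;>
    · obtain ⟨u, hu, rfl⟩ := Finset.mem_image.1 h
      simp [ih hu]

lemma sum_B_arctan {μ : ℝ} (hμ : 0 < μ) :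
    ∀ (n : ℕ) (p : ℤ × ℤ × ℤ × ℤ), p ∈ T →
      ∑ l ∈ Bn n, Real.arctan (μ / sV μ (NN p l)) = Real.arctan (μ / sV μ p) := by
  intro n
  induction n with
  | zero => intro p _; simp [Bn, NN]
  | succ n ih =>
    intro p hp
    rw [sum_B_split (fun q => Real.arctan (μ / sV μ q)) n p, ih _ (step_mem hp true),
      ih _ (step_mem hp false), ← node_arctan hμ hp]

lemma sum_A_eq {μ : ℝ} (hμ : 0 < μ) :
    ∀ (n : ℕ) (p : ℤ × ℤ × ℤ × ℤ), p ∈ T →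
      ∑ l ∈ An n, FF μ (NN p l) =
        gg μ (sV μ p) - ∑ l ∈ Bn n, gg μ (sV μ (NN p l)) := by
  intro n
  induction n with
  | zero => intro p _; simp [An, Bn, NN]
  | succ n ih =>
    intro p hp
    rw [sum_A_split (fun q => FF μ q) n p, sum_B_split (fun q => gg μ (sV μ q)) n p,
      ih _ (step_mem hp true), ih _ (step_mem hp false)]
    have := node_key hμ hp
    show FF μ p + _ = _
    linarith

lemma ac_ge : ∀ (l : List Bool) (p : ℤ × ℤ × ℤ × ℤ), p ∈ T →
    p.1 + p.2.2.1 + l.length ≤ (NN p l).1 + (NN p l).2.2.1 := by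
  intro l
  induction l with
  | nil => intro p _; simp [NN]
  | cons m l ih =>
    intro p hp
    have h1 := ih (step m p) (step_mem hp m)
    have h2 := one_le_a hp
    obtain ⟨a, b, c, d⟩ := p
    simp only at h2
    cases m
    · simp only [NN, step_false, List.length_cons] at h1 ⊢
      push_cast at h1 ⊢
      omega
    · simp only [NN, step_true, List.length_cons] at h1 ⊢
      push_cast at h1 ⊢
      omega

lemma sv_ge_len {μ : ℝ} (hμ : 0 < μ) {l : List Bool} {n : ℕ} (hl : l ∈ Bn n) :
    ((n : ℝ) + 2) / 2 ≤ sV μ (NN root l) := by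
  have h1 := ac_ge l root root_mem
  rw [len_Bn hl] at h1
  have hmem := NN_mem root_mem l
  obtain h2 := one_le_a hmem
  set q := NN root l with hq
  obtain ⟨a, b, c, d⟩ := q
  obtain ⟨g1, g2, g3, g4, g5⟩ := (memT_iff a b c d).1 hmem
  simp only [root] at h1
  simp only at h2 ⊢
  -- a + c ≥ n + 2, a,c ≥ 1, so a*c ≥ (a+c)/2 ≥ (n+2)/2, and sV ≥ a*c
  have key : (n : ℤ) + 2 ≤ 2 * (a * c) := by nlinarith [h2.1, h2.2]
  have keyR : ((n : ℝ)) + 2 ≤ 2 * ((a : ℝ) * (c : ℝ)) := by exact_mod_cast key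
  have hbd : (0 : ℝ) ≤ (b : ℝ) * (d : ℝ) := by
    have : 0 ≤ b * d := mul_nonneg g2 g4
    exact_mod_cast this
  rw [sV]
  simp only
  nlinarith [sq_nonneg μ]
noncomputable def Ee (μ : ℝ) (n : ℕ) : ℝ := ∑ l ∈ Bn n, gg μ (sV μ (NN root l))

lemma sv_root (μ : ℝ) : sV μ root = 1 := by rw [sV, root]; norm_num

lemma Ee_nonneg {μ : ℝ} (hμ : 0 < μ) (n : ℕ) : 0 ≤ Ee μ n :=
  Finset.sum_nonneg fun l _ => gg_nonneg hμ (sv_pos hμ (NN_mem root_mem l))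

lemma Ee_le {μ : ℝ} (hμ : 0 < μ) (n : ℕ) :
    Ee μ n ≤ (2 * μ / ((n : ℝ) + 2)) ^ 2 / (2 * μ ^ 3) * Real.arctan μ := by
  set C : ℝ := (2 * μ / ((n : ℝ) + 2)) ^ 2 / (2 * μ ^ 3) with hC
  have hC0 : 0 ≤ C := by rw [hC]; positivity
  have hb : ∀ l ∈ Bn n, gg μ (sV μ (NN root l)) ≤ C * Real.arctan (μ / sV μ (NN root l)) := by
    intro l hl
    have hsl := sv_ge_len (μ := μ) hμ hl
    have hs0 : 0 < sV μ (NN root l) := sv_pos hμ (NN_mem root_mem l)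
    refine (gg_le hμ hs0).trans ?_
    have hx : μ / sV μ (NN root l) ≤ 2 * μ / ((n : ℝ) + 2) := by
      rw [div_le_div_iff₀ hs0 (by positivity)]
      nlinarith
    have hx0 : (0:ℝ) ≤ μ / sV μ (NN root l) := by positivity
    have har : 0 ≤ Real.arctan (μ / sV μ (NN root l)) := my_arctan_nonneg hx0
    have h2 : (μ / sV μ (NN root l)) ^ 2 * Real.arctan (μ / sV μ (NN root l)) ≤
        (2 * μ / ((n : ℝ) + 2)) ^ 2 * Real.arctan (μ / sV μ (NN root l)) :=
      mul_le_mul_of_nonneg_right (pow_le_pow_left₀ hx0 hx 2) har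
    calc (μ / sV μ (NN root l)) ^ 2 * Real.arctan (μ / sV μ (NN root l)) / (2 * μ ^ 3)
        ≤ (2 * μ / ((n : ℝ) + 2)) ^ 2 * Real.arctan (μ / sV μ (NN root l)) / (2 * μ ^ 3) := by
          apply div_le_div_of_nonneg_right h2 (by positivity) |>.trans_eq rfl
      _ = C * Real.arctan (μ / sV μ (NN root l)) := by rw [hC]; ring
  calc Ee μ n ≤ ∑ l ∈ Bn n, C * Real.arctan (μ / sV μ (NN root l)) := Finset.sum_le_sum hb
    _ = C * ∑ l ∈ Bn n, Real.arctan (μ / sV μ (NN root l)) := by rw [Finset.mul_sum]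
    _ = C * Real.arctan (μ / sV μ root) := by rw [sum_B_arctan hμ n root root_mem]
    _ = C * Real.arctan μ := by rw [sv_root, div_one]

open Filter in
lemma Ee_tendsto {μ : ℝ} (hμ : 0 < μ) : Tendsto (Ee μ) atTop (nhds 0) := by
  apply squeeze_zero (Ee_nonneg hμ) (Ee_le hμ)
  have h1 : Tendsto (fun n : ℕ => ((n : ℝ) + 2)) atTop atTop :=
    tendsto_atTop_add_const_right _ _ tendsto_natCast_atTop_atTop
  have h2 : Tendsto (fun n : ℕ => ((n : ℝ) + 2)⁻¹) atTop (nhds 0) := h1.inv_tendsto_atTop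
  have h3 : Tendsto (fun n : ℕ => (4 * μ ^ 2 * Real.arctan μ / (2 * μ ^ 3)) *
      (((n : ℝ) + 2)⁻¹ * ((n : ℝ) + 2)⁻¹)) atTop (nhds 0) := by
    have := ((h2.mul h2).const_mul (4 * μ ^ 2 * Real.arctan μ / (2 * μ ^ 3)))
    simpa using this
  convert h3 using 2 with n
  have hn : ((n : ℝ) + 2) ≠ 0 := by positivity
  field_simp
  ring

lemma main_hasSum {μ : ℝ} (hμ : 0 < μ) :
    HasSum (fun l : List Bool => FF μ (NN root l)) (gg μ 1) := by
  apply hasSum_of_isLUB_of_nonneg _ (fun l => FF_nonneg μ _)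
  constructor
  · rintro x ⟨S, rfl⟩
    have hsub : S ⊆ An ((S.sup List.length) + 1) :=
      fun l hl => mem_An (Nat.lt_succ_of_le (Finset.le_sup hl))
    calc ∑ l ∈ S, FF μ (NN root l)
        ≤ ∑ l ∈ An ((S.sup List.length) + 1), FF μ (NN root l) :=
          Finset.sum_le_sum_of_subset_of_nonneg hsub (fun i _ _ => FF_nonneg μ _)
      _ = gg μ (sV μ root) - Ee μ ((S.sup List.length) + 1) := sum_A_eq hμ _ root root_mem
      _ ≤ gg μ (sV μ root) := by linarith [Ee_nonneg hμ ((S.sup List.length) + 1)]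
      _ = gg μ 1 := by rw [sv_root]
  · intro x hx
    have key : ∀ n : ℕ, gg μ 1 - Ee μ n ≤ x := by
      intro n
      have h1 : (∑ i ∈ An n, FF μ (NN root i)) ≤ x := hx ⟨An n, rfl⟩
      rw [sum_A_eq hμ n root root_mem, sv_root] at h1
      exact h1
    have htend : Filter.Tendsto (fun n : ℕ => gg μ 1 - Ee μ n) Filter.atTop (nhds (gg μ 1)) := by
      have := (Ee_tendsto hμ).const_sub (gg μ 1)
      simpa using this
    exact le_of_tendsto htend (Filter.Eventually.of_forall key)

noncomputable def eT : List Bool ≃ T :=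
  Equiv.ofBijective (fun l => (⟨NN root l, NN_mem root_mem l⟩ : T))
    ⟨fun l l' h => NN_inj l l' root root_mem (congrArg Subtype.val h),
     fun q => by obtain ⟨l, hl⟩ := reach q.2; exact ⟨l, Subtype.ext hl⟩⟩
end SB

theorem stmt_10 (μ : ℝ) (hμ : 0 < μ) :
    HasSum
      (fun p : T =>
        1 / (((p.val.1 : ℝ) ^ 2 + μ ^ 2 * (p.val.2.1 : ℝ) ^ 2) *
          ((p.val.2.2.1 : ℝ) ^ 2 + μ ^ 2 * (p.val.2.2.2 : ℝ) ^ 2) *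
          (((p.val.1 : ℝ) + (p.val.2.2.1 : ℝ)) ^ 2 +
            μ ^ 2 * ((p.val.2.1 : ℝ) + (p.val.2.2.2 : ℝ)) ^ 2)))
      ((1 / (4 * μ ^ 2)) * (2 * Real.arctan μ / μ - 2 / (1 + μ ^ 2))) := by
  have h := SB.main_hasSum hμ
  have target_eq : SB.gg μ 1 = (1 / (4 * μ ^ 2)) * (2 * Real.arctan μ / μ - 2 / (1 + μ ^ 2)) := by
    rw [SB.gg, div_one]
    field_simp
    ring
  rw [← target_eq]
  exact (SB.eT.hasSum_iff).mp h
end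

section
/- The series whose terms are 1/( (4a² − b²)·(4c² − d²)·(4(a+c)² − (b+d)²) ), summed over all quadruples (a,b,c,d) of nonnegative integers with a ≥ b, c ≥ d and a·d − b·c = 1, converges and its sum equals ( 4/3 − log 3 ) / 32. -/
namespace Stmt12

abbrev P := ℤ × ℤ × ℤ × ℤ

def root : P := (1, 0, 1, 1)

def stp : Bool → P → P
  | true, (a, b, c, d) => (a, b, a + c, b + d)
  | false, (a, b, c, d) => (a + c, b + d, c, d)

/-- Path from the root: head of the list is the deepest move. -/
def e : List Bool → P
  | [] => root
  | bb :: l => stp bb (e l)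

lemma mem_T_iff (a b c d : ℤ) : ((a,b,c,d) : P) ∈ T ↔
    (b ≤ a ∧ 0 ≤ b ∧ d ≤ c ∧ 0 ≤ d ∧ a * d - b * c = 1) := Iff.rfl

lemma root_mem : root ∈ T := by
  rw [show root = ((1:ℤ),(0:ℤ),(1:ℤ),(1:ℤ)) from rfl, mem_T_iff]
  norm_num

lemma T_pos {a b c d : ℤ} (h : ((a,b,c,d) : P) ∈ T) : 1 ≤ a ∧ 1 ≤ d ∧ 1 ≤ c := by
  obtain ⟨h1, h2, h3, h4, h5⟩ := h
  dsimp only at *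
  refine ⟨?_, ?_, ?_⟩ <;> nlinarith

lemma T_pos' {p : P} (h : p ∈ T) : 1 ≤ p.1 ∧ 1 ≤ p.2.2.2 ∧ 1 ≤ p.2.2.1 := by
  obtain ⟨a, b, c, d⟩ := p; exact T_pos h

lemma stp_mem {p : P} (h : p ∈ T) (bb : Bool) : stp bb p ∈ T := by
  obtain ⟨a, b, c, d⟩ := p
  obtain ⟨h1, h2, h3, h4, h5⟩ := h
  dsimp only at *
  cases bb <;>
    refine ⟨?_, ?_, ?_, ?_, ?_⟩ <;> simp only [stp, mem_T_iff] <;> nlinarith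

lemma e_mem (l : List Bool) : e l ∈ T := by
  induction l with
  | nil => exact root_mem
  | cons bb l ih => exact stp_mem ih bb

lemma stp_sum {p : P} (h : p ∈ T) (bb : Bool) :
    p.1 + p.2.2.1 + 1 ≤ (stp bb p).1 + (stp bb p).2.2.1 := by
  have h2 := T_pos' h
  obtain ⟨a, b, c, d⟩ := p
  obtain ⟨ha, hd, hc⟩ := h2
  dsimp only at *
  cases bb <;> simp only [stp] <;> linarith

/-- depth invariant: `a + c ≥ length + 2`. -/
lemma e_depth (l : List Bool) : (l.length : ℤ) + 2 ≤ (e l).1 + (e l).2.2.1 := by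
  induction l with
  | nil => simp [e, root]
  | cons bb l ih =>
      have h2 := stp_sum (e_mem l) bb
      have : e (bb :: l) = stp bb (e l) := rfl
      rw [this, List.length_cons]
      push_cast
      linarith

lemma stp_true_ne_stp_false {p q : P} (hp : p ∈ T) (hq : q ∈ T) :
    stp true p ≠ stp false q := by
  have h1 := T_pos' hp
  have h2 := T_pos' hq
  obtain ⟨a, b, c, d⟩ := p
  obtain ⟨a', b', c', d'⟩ := q
  obtain ⟨-, -, -, hd', -⟩ := hq
  simp only [stp, Prod.mk.injEq]
  dsimp only at *
  intro h
  rw [Prod.ext_iff, Prod.ext_iff, Prod.ext_iff] at h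
  dsimp only at h
  omega

lemma stp_inj {bb : Bool} {p q : P} (h : stp bb p = stp bb q) : p = q := by
  obtain ⟨a, b, c, d⟩ := p
  obtain ⟨a', b', c', d'⟩ := q
  cases bb <;> simp only [stp, Prod.mk.injEq] at h ⊢ <;> omega

lemma stp_ne_root {p : P} (hp : p ∈ T) (bb : Bool) : stp bb p ≠ root := by
  intro h
  have h1 := stp_sum hp bb
  have h2 := T_pos' hp
  rw [h] at h1
  have h3 : (root : P).1 + root.2.2.1 = 2 := rfl
  omega

lemma e_injective : Function.Injective e := by
  intro l1
  induction l1 with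
  | nil =>
      intro l2 h
      cases l2 with
      | nil => rfl
      | cons bb l => exact absurd h.symm (stp_ne_root (e_mem l) bb)
  | cons bb l ih =>
      intro l2 h
      cases l2 with
      | nil => exact absurd h (stp_ne_root (e_mem l) bb)
      | cons bb' l' =>
          have hm := e_mem l
          have hm' := e_mem l'
          cases bb <;> cases bb'
          · rw [show l = l' from ih (stp_inj h)]
          · exact absurd h.symm (stp_true_ne_stp_false hm' hm)
          · exact absurd h (stp_true_ne_stp_false hm hm')
          · rw [show l = l' from ih (stp_inj h)]

lemma e_surj_aux : ∀ n : ℕ, ∀ p ∈ T, p.1 + p.2.2.1 ≤ (n : ℤ) → ∃ l, e l = p := by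
  intro n
  induction n with
  | zero =>
      rintro ⟨a, b, c, d⟩ hp hn
      obtain ⟨ha, hd, hc⟩ := T_pos hp
      have hn' : a + c ≤ (0 : ℤ) := hn
      omega
  | succ n ih =>
      rintro ⟨a, b, c, d⟩ hp hn
      have hn' : a + c ≤ (n : ℤ) + 1 := by exact_mod_cast hn
      obtain ⟨h1, h2, h3, h4, h5⟩ := hp
      have hpos := T_pos ⟨h1, h2, h3, h4, h5⟩
      obtain ⟨ha, hd, hc⟩ := hpos
      dsimp only at *
      by_cases hbd : d ≤ b
      · -- right child of (a-c, b-d, c, d)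
        have hac : b - d ≤ a - c := by
          by_contra hcon
          push_neg at hcon
          nlinarith [mul_nonneg (sub_nonneg.2 h3) (sub_nonneg.2 hbd)]
        have hq : ((a - c, b - d, c, d) : P) ∈ T := by
          refine ⟨?_, ?_, ?_, ?_, ?_⟩
          · show b - d ≤ a - c; omega
          · show (0 : ℤ) ≤ b - d; omega
          · show d ≤ c; exact h3
          · show (0 : ℤ) ≤ d; exact h4
          · show (a - c) * d - (b - d) * c = 1; linear_combination h5
        obtain ⟨l, hl⟩ := ih (a - c, b - d, c, d) hq (by show a - c + c ≤ (n : ℤ); linarith)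
        exact ⟨false :: l, by simp only [e, hl, stp, Prod.mk.injEq, and_true, true_and]; omega⟩
      · push_neg at hbd
        by_cases hroot : a = 1 ∧ b = 0 ∧ c = 1 ∧ d = 1
        · exact ⟨[], by simp only [e, root]; obtain ⟨r1, r2, r3, r4⟩ := hroot; subst r1; subst r2; subst r3; subst r4; rfl⟩
        · -- left child of (a, b, c-a, d-b)
          have hca : d - b ≤ c - a := by
            rcases eq_or_lt_of_le h2 with hb0 | hb1
            · -- b = 0
              have hb : b = 0 := hb0.symm
              subst hb
              have had : a = 1 ∧ d = 1 := by constructor <;> nlinarith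
              obtain ⟨ha1, hd1⟩ := had
              subst ha1; subst hd1
              simp at hroot
              omega
            · by_contra hcon
              push_neg at hcon
              nlinarith [mul_nonneg (sub_nonneg.2 h1) (by omega : (0:ℤ) ≤ d - b - 1)]
          have hq : ((a, b, c - a, d - b) : P) ∈ T := by
            refine ⟨?_, ?_, ?_, ?_, ?_⟩
            · show b ≤ a; exact h1
            · show (0 : ℤ) ≤ b; exact h2
            · show d - b ≤ c - a; omega
            · show (0 : ℤ) ≤ d - b; omega
            · show a * (d - b) - b * (c - a) = 1; linear_combination h5
          obtain ⟨l, hl⟩ := ih (a, b, c - a, d - b) hq (by show a + (c - a) ≤ (n : ℤ); linarith)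
          exact ⟨true :: l, by simp only [e, hl, stp, Prod.mk.injEq, and_true, true_and]; omega⟩

lemma e_surjective : ∀ p ∈ T, ∃ l, e l = p := by
  rintro ⟨a, b, c, d⟩ hp
  obtain ⟨ha, hd, hc⟩ := T_pos hp
  refine e_surj_aux (a + c).toNat _ hp ?_
  exact Int.self_le_toNat _

/-! ### Real-valued functions on nodes -/

noncomputable section

/-- The summand. -/
def Ff (p : P) : ℝ :=
  1 / ((4 * (p.1 : ℝ) ^ 2 - (p.2.1 : ℝ) ^ 2) *
    (4 * (p.2.2.1 : ℝ) ^ 2 - (p.2.2.2 : ℝ) ^ 2) *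
    (4 * ((p.1 : ℝ) + (p.2.2.1 : ℝ)) ^ 2 - ((p.2.1 : ℝ) + (p.2.2.2 : ℝ)) ^ 2))

/-- The telescoping potential. -/
def Gf (p : P) : ℝ :=
  (1 / 16) * (1 / ((2 * (p.1 : ℝ) - (p.2.1 : ℝ)) * (2 * (p.2.2.1 : ℝ) + (p.2.2.2 : ℝ))) +
    1 / ((2 * (p.1 : ℝ) + (p.2.1 : ℝ)) * (2 * (p.2.2.1 : ℝ) - (p.2.2.2 : ℝ))))

/-- The limiting (logarithmic) potential. -/
def Pf (p : P) : ℝ :=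
  (1 / 32) * (Real.log (2 + (p.2.2.2 : ℝ) / (p.2.2.1 : ℝ)) -
    Real.log (2 - (p.2.2.2 : ℝ) / (p.2.2.1 : ℝ)) -
    Real.log (2 + (p.2.1 : ℝ) / (p.1 : ℝ)) + Real.log (2 - (p.2.1 : ℝ) / (p.1 : ℝ)))

/-- The interval length. -/
def Df (p : P) : ℝ := 1 / ((p.1 : ℝ) * (p.2.2.1 : ℝ))

end

lemma rfacts {a b c d : ℤ} (h : ((a,b,c,d) : P) ∈ T) :
    (1 : ℝ) ≤ (a : ℝ) ∧ (0 : ℝ) ≤ (b : ℝ) ∧ (b : ℝ) ≤ (a : ℝ) ∧ (1 : ℝ) ≤ (d : ℝ) ∧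
      (d : ℝ) ≤ (c : ℝ) ∧ (a : ℝ) * (d : ℝ) - (b : ℝ) * (c : ℝ) = 1 := by
  obtain ⟨ha, hd, hc⟩ := T_pos h
  obtain ⟨h1, h2, h3, h4, h5⟩ := h
  refine ⟨?_, ?_, ?_, ?_, ?_, ?_⟩ <;> exact_mod_cast (by assumption : _)

/-- The fundamental telescoping identity. -/
lemma tel_identity (A B C D : ℝ) (hA : 1 ≤ A) (hB0 : 0 ≤ B) (hBA : B ≤ A) (hD : 1 ≤ D)
    (hDC : D ≤ C) (hdet : A * D - B * C = 1) :
    (1/16) * (1/((2*A-B)*(2*C+D)) + 1/((2*A+B)*(2*C-D))) =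
      1 / ((4*A^2 - B^2) * (4*C^2 - D^2) * (4*(A+C)^2 - (B+D)^2)) +
      (1/16) * (1/((2*A-B)*(2*(A+C)+(B+D))) + 1/((2*A+B)*(2*(A+C)-(B+D)))) +
      (1/16) * (1/((2*(A+C)-(B+D))*(2*C+D)) + 1/((2*(A+C)+(B+D))*(2*C-D))) := by
  have hA0 : A ≠ 0 := by linarith
  have h1 : (0:ℝ) < 2*A - B := by linarith
  have h2 : (0:ℝ) < 2*A + B := by linarith
  have h3 : (0:ℝ) < 2*C - D := by linarith
  have h4 : (0:ℝ) < 2*C + D := by linarith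
  have h5 : (0:ℝ) < 2*(A+C) - (B+D) := by linarith
  have h6 : (0:ℝ) < 2*(A+C) + (B+D) := by linarith
  have hQ1 : 4*A^2 - B^2 = (2*A-B)*(2*A+B) := by ring
  have hQ2 : 4*C^2 - D^2 = (2*C-D)*(2*C+D) := by ring
  have hQ3 : 4*(A+C)^2 - (B+D)^2 = (2*(A+C)-(B+D))*(2*(A+C)+(B+D)) := by ring
  rw [hQ1, hQ2, hQ3]
  have hDval : D = (1 + B*C)/A := by field_simp; linarith
  field_simp [h1.ne', h2.ne', h3.ne', h4.ne', h5.ne', h6.ne']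
  subst hDval
  field_simp
  ring

lemma Gf_tel {p : P} (h : p ∈ T) : Gf p = Ff p + Gf (stp true p) + Gf (stp false p) := by
  obtain ⟨a, b, c, d⟩ := p
  obtain ⟨hA, hB0, hBA, hD, hDC, hdet⟩ := rfacts h
  show Gf (a,b,c,d) = Ff (a,b,c,d) + Gf (a,b,a+c,b+d) + Gf (a+c,b+d,c,d)
  simp only [Gf, Ff]
  push_cast
  linear_combination tel_identity (a:ℝ) (b:ℝ) (c:ℝ) (d:ℝ) hA hB0 hBA hD hDC hdet

lemma Pf_tel {p : P} (h : p ∈ T) : Pf p = Pf (stp true p) + Pf (stp false p) := by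
  obtain ⟨a, b, c, d⟩ := p
  show Pf (a,b,c,d) = Pf (a,b,a+c,b+d) + Pf (a+c,b+d,c,d)
  simp only [Pf]
  push_cast
  ring

lemma Df_tel {p : P} (h : p ∈ T) : Df p = Df (stp true p) + Df (stp false p) := by
  obtain ⟨a, b, c, d⟩ := p
  obtain ⟨hA, hB0, hBA, hD, hDC, hdet⟩ := rfacts h
  show Df (a,b,c,d) = Df (a,b,a+c,b+d) + Df (a+c,b+d,c,d)
  simp only [Df]
  push_cast
  have h1 : (a:ℝ) ≠ 0 := by linarith
  have h2 : (c:ℝ) ≠ 0 := by linarith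
  have h3 : (a:ℝ) + (c:ℝ) ≠ 0 := by linarith
  field_simp
  ring

lemma Ff_nonneg {p : P} (h : p ∈ T) : 0 ≤ Ff p := by
  obtain ⟨a, b, c, d⟩ := p
  obtain ⟨hA, hB0, hBA, hD, hDC, hdet⟩ := rfacts h
  show 0 ≤ Ff (a,b,c,d)
  simp only [Ff]
  have h1 : (0:ℝ) < 4 * (a:ℝ)^2 - (b:ℝ)^2 := by nlinarith
  have h2 : (0:ℝ) < 4 * (c:ℝ)^2 - (d:ℝ)^2 := by nlinarith
  have h3 : (0:ℝ) < 4 * ((a:ℝ)+(c:ℝ))^2 - ((b:ℝ)+(d:ℝ))^2 := by nlinarith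
  positivity

lemma key_half {u v w : ℝ} (hu : 0 < u) (hv : 0 < v) (h6 : 6 ≤ u * v)
    (hnum : |v - u| ≤ 3 * w) : |1/u - 1/v| ≤ w / 2 := by
  have hw : 0 ≤ 3 * w := le_trans (abs_nonneg _) hnum
  rw [div_sub_div _ _ hu.ne' hv.ne', one_mul, mul_one, abs_div,
    abs_of_pos (by positivity : (0:ℝ) < u * v)]
  calc |v - u| / (u * v) ≤ 3 * w / 6 :=
        div_le_div₀ hw hnum (by norm_num) h6
    _ = w / 2 := by ring

lemma key_ineq {x y ξ : ℝ} (hx : 0 ≤ x) (h1 : x ≤ ξ) (h2 : ξ ≤ y) (hy : y ≤ 1) :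
    |(1/((2-x)*(2+y)) + 1/((2+x)*(2-y))) - (1/(2+ξ) + 1/(2-ξ))/2| ≤ y - x := by
  have b1 : (0:ℝ) < 2 - x := by linarith
  have b2 : (0:ℝ) < 2 + y := by linarith
  have b3 : (0:ℝ) < 2 + x := by linarith
  have b4 : (0:ℝ) < 2 - y := by linarith
  have hxi0 : 0 ≤ ξ := le_trans hx h1
  have hxi1 : ξ ≤ 1 := le_trans h2 hy
  have b5 : (0:ℝ) < 4 - ξ^2 := by nlinarith
  have hmid : (1/(2+ξ) + 1/(2-ξ))/2 = 1/(4-ξ^2) + 1/(4-ξ^2) := by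
    have n1 : (2:ℝ) + ξ ≠ 0 := by linarith
    have n2 : (2:ℝ) - ξ ≠ 0 := by nlinarith
    field_simp
    ring
  have hv3 : (3:ℝ) ≤ 4 - ξ^2 := by nlinarith
  have hu1 : (2:ℝ) ≤ (2-x)*(2+y) := by nlinarith [mul_nonneg hx (by linarith : (0:ℝ) ≤ 2 - y), mul_nonneg hx (by linarith : (0:ℝ) ≤ y - x)]
  have hu2 : (2:ℝ) ≤ (2+x)*(2-y) := by nlinarith [mul_nonneg hx (by linarith : (0:ℝ) ≤ 2 - y)]
  have e1 : |1/((2-x)*(2+y)) - 1/(4-ξ^2)| ≤ (y - x)/2 := by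
    apply key_half (by positivity) b5
    · nlinarith [mul_le_mul hu1 hv3 (by norm_num) (by linarith)]
    · rw [abs_le]
      constructor <;> nlinarith [mul_nonneg (sub_nonneg.2 h1) (by linarith : (0:ℝ) ≤ ξ + x),
        mul_nonneg (sub_nonneg.2 h2) (by linarith : (0:ℝ) ≤ y + ξ),
        mul_nonneg hx (by linarith : (0:ℝ) ≤ y - x),
        mul_nonneg (by linarith : (0:ℝ) ≤ 1 - x) (by linarith : (0:ℝ) ≤ y - x),
        mul_nonneg (by linarith : (0:ℝ) ≤ 1 - y) (by linarith : (0:ℝ) ≤ y - x)]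
  have e2 : |1/((2+x)*(2-y)) - 1/(4-ξ^2)| ≤ (y - x)/2 := by
    apply key_half (by positivity) b5
    · nlinarith [mul_le_mul hu2 hv3 (by norm_num) (by linarith)]
    · rw [abs_le]
      constructor <;> nlinarith [mul_nonneg (sub_nonneg.2 h1) (by linarith : (0:ℝ) ≤ ξ + x),
        mul_nonneg (sub_nonneg.2 h2) (by linarith : (0:ℝ) ≤ y + ξ),
        mul_nonneg hx (by linarith : (0:ℝ) ≤ y - x),
        mul_nonneg (by linarith : (0:ℝ) ≤ 1 - x) (by linarith : (0:ℝ) ≤ y - x),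
        mul_nonneg (by linarith : (0:ℝ) ≤ 1 - y) (by linarith : (0:ℝ) ≤ y - x)]
  rw [hmid]
  calc |(1/((2-x)*(2+y)) + 1/((2+x)*(2-y))) - (1/(4-ξ^2) + 1/(4-ξ^2))|
      = |(1/((2-x)*(2+y)) - 1/(4-ξ^2)) + (1/((2+x)*(2-y)) - 1/(4-ξ^2))| := by ring_nf
    _ ≤ |1/((2-x)*(2+y)) - 1/(4-ξ^2)| + |1/((2+x)*(2-y)) - 1/(4-ξ^2)| := abs_add_le _ _
    _ ≤ (y - x)/2 + (y - x)/2 := add_le_add e1 e2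
    _ = y - x := by ring

lemma Gf_sub_Pf_bound {p : P} (h : p ∈ T) : |Gf p - Pf p| ≤ (1/16) * Df p ^ 2 := by
  obtain ⟨a, b, c, d⟩ := p
  obtain ⟨hA, hB0, hBA, hD, hDC, hdet⟩ := rfacts h
  have hApos : (0:ℝ) < (a:ℝ) := by linarith
  have hCpos : (0:ℝ) < (c:ℝ) := by linarith
  set x : ℝ := (b:ℝ)/(a:ℝ) with hxdef
  set y : ℝ := (d:ℝ)/(c:ℝ) with hydef
  have hx0 : 0 ≤ x := div_nonneg hB0 hApos.le
  have hx1 : x ≤ 1 := (div_le_one hApos).2 hBA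
  have hy1 : y ≤ 1 := (div_le_one hCpos).2 hDC
  have hy0 : 0 < y := div_pos (by linarith) hCpos
  have hxy : y - x = 1/((a:ℝ)*(c:ℝ)) := by
    have h1 : y - x = ((d:ℝ)*(a:ℝ) - (c:ℝ)*(b:ℝ))/((c:ℝ)*(a:ℝ)) :=
      div_sub_div _ _ hCpos.ne' hApos.ne'
    rw [h1, show (d:ℝ)*(a:ℝ) - (c:ℝ)*(b:ℝ) = 1 from by linear_combination hdet,
      mul_comm (c:ℝ) (a:ℝ)]
  have hxlty : x < y := by
    have : (0:ℝ) < 1/((a:ℝ)*(c:ℝ)) := by positivity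
    linarith
  -- Mean value theorem for K t = (log(2+t) - log(2-t))/32
  have hderiv : ∀ t ∈ Set.Icc x y,
      HasDerivAt (fun s : ℝ => (Real.log (2+s) - Real.log (2-s))/32)
        ((1/(2+t) - (-1)/(2-t))/32) t := by
    intro t ht
    obtain ⟨ht1, ht2⟩ := ht
    have b1 : (0:ℝ) < 2 + t := by linarith
    have b2 : (0:ℝ) < 2 - t := by linarith
    have l1 : HasDerivAt (fun s : ℝ => Real.log (2+s)) (1/(2+t)) t := by
      have hb : HasDerivAt (fun s : ℝ => 2 + s) 1 t := by
        simpa using (hasDerivAt_id t).const_add 2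
      simpa using hb.log b1.ne'
    have l2 : HasDerivAt (fun s : ℝ => Real.log (2-s)) ((-1)/(2-t)) t := by
      have hb : HasDerivAt (fun s : ℝ => 2 - s) (-1) t := by
        simpa using (hasDerivAt_id t).const_sub 2
      simpa using hb.log b2.ne'
    exact (l1.sub l2).div_const 32
  have hcont : ContinuousOn (fun s : ℝ => (Real.log (2+s) - Real.log (2-s))/32)
      (Set.Icc x y) := fun t ht => (hderiv t ht).continuousAt.continuousWithinAt
  obtain ⟨ξ, hξmem, hslope⟩ := exists_hasDerivAt_eq_slope
    (fun s : ℝ => (Real.log (2+s) - Real.log (2-s))/32)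
    (fun t : ℝ => (1/(2+t) - (-1)/(2-t))/32) hxlty hcont
    (fun t ht => hderiv t (Set.mem_Icc_of_Ioo ht))
  obtain ⟨hξ1, hξ2⟩ := hξmem
  have hdiff : (Real.log (2+y) - Real.log (2-y))/32 - (Real.log (2+x) - Real.log (2-x))/32
      = (1/(2+ξ) - (-1)/(2-ξ))/32 * (y - x) := by
    have h0 : y - x ≠ 0 := by linarith
    have := hslope
    field_simp [h0] at this ⊢
    linarith [this]
  have hPf : Pf (a,b,c,d) = (Real.log (2+y) - Real.log (2-y))/32
      - (Real.log (2+x) - Real.log (2-x))/32 := by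
    simp only [Pf]
    ring
  have hG : Gf (a,b,c,d) = (y-x)/16 * (1/((2-x)*(2+y)) + 1/((2+x)*(2-y))) := by
    simp only [Gf]
    rw [hxy]
    have n1 : (0:ℝ) < 2*(a:ℝ) - (b:ℝ) := by linarith
    have n2 : (0:ℝ) < 2*(c:ℝ) + (d:ℝ) := by linarith
    have n3 : (0:ℝ) < 2*(a:ℝ) + (b:ℝ) := by linarith
    have n4 : (0:ℝ) < 2*(c:ℝ) - (d:ℝ) := by linarith
    have m1 : (0:ℝ) < 2 - x := by linarith
    have m2 : (0:ℝ) < 2 + y := by linarith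
    have m3 : (0:ℝ) < 2 + x := by linarith
    have m4 : (0:ℝ) < 2 - y := by linarith
    rw [hxdef, hydef] at *
    field_simp
  have hkey := key_ineq hx0 hξ1.le hξ2.le hy1
  have hDf : Df (a,b,c,d) = y - x := by
    show 1 / ((a:ℝ) * (c:ℝ)) = y - x
    rw [hxy]
  have hsplit : Gf (a,b,c,d) - Pf (a,b,c,d)
      = (y-x)/16 * ((1/((2-x)*(2+y)) + 1/((2+x)*(2-y))) - (1/(2+ξ) + 1/(2-ξ))/2) := by
    rw [hG, hPf, hdiff]
    ring
  have hpos : (0:ℝ) < y - x := by linarith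
  rw [hsplit, hDf, abs_mul, abs_of_pos (by positivity : (0:ℝ) < (y-x)/16)]
  calc (y-x)/16 * |(1/((2-x)*(2+y)) + 1/((2+x)*(2-y))) - (1/(2+ξ) + 1/(2-ξ))/2|
      ≤ (y-x)/16 * (y-x) := by
        apply mul_le_mul_of_nonneg_left hkey (by positivity)
    _ = 1/16 * (y-x)^2 := by ring


lemma Df_pos {p : P} (h : p ∈ T) : 0 < Df p := by
  obtain ⟨a, b, c, d⟩ := p
  obtain ⟨hA, hB0, hBA, hD, hDC, hdet⟩ := rfacts h
  show (0:ℝ) < 1 / ((a:ℝ) * (c:ℝ))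
  have : (0:ℝ) < (a:ℝ) * (c:ℝ) := by nlinarith
  positivity

lemma Df_le {p : P} (h : p ∈ T) (n : ℕ) (hlen : (n : ℤ) + 2 ≤ p.1 + p.2.2.1) :
    Df p ≤ 2 / ((n : ℝ) + 2) := by
  obtain ⟨a, b, c, d⟩ := p
  obtain ⟨hA, hB0, hBA, hD, hDC, hdet⟩ := rfacts h
  have hac : ((n : ℝ) + 2) / 2 ≤ (a:ℝ) * (c:ℝ) := by
    have h1 : (n : ℝ) + 2 ≤ (a:ℝ) + (c:ℝ) := by exact_mod_cast hlen
    nlinarith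
  show 1 / ((a:ℝ) * (c:ℝ)) ≤ 2 / ((n : ℝ) + 2)
  rw [div_le_div_iff₀ (by nlinarith) (by positivity)]
  nlinarith

/-! ### Level sums -/

noncomputable def lvl (f : P → ℝ) (n : ℕ) : ℝ := ∑ v : Fin n → Bool, f (e (List.ofFn v))

lemma ofFn_cons {n : ℕ} (b : Bool) (v : Fin n → Bool) :
    List.ofFn (Fin.cons b v : Fin (n+1) → Bool) = b :: List.ofFn v := by
  rw [List.ofFn_succ]
  simp [Fin.cons_zero, Fin.cons_succ]

lemma lvl_succ (f : P → ℝ) (n : ℕ) :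
    lvl f (n+1) = (∑ v : Fin n → Bool, f (stp true (e (List.ofFn v)))) +
      (∑ v : Fin n → Bool, f (stp false (e (List.ofFn v)))) := by
  rw [lvl, ← Equiv.sum_comp (Fin.consEquiv (fun _ : Fin (n+1) => Bool))
    (fun w => f (e (List.ofFn w)))]
  rw [Fintype.sum_prod_type, Fintype.sum_bool]
  congr 1 <;> (apply Finset.sum_congr rfl; intro v _; congr 1) <;>
    rw [show (Fin.consEquiv (fun _ : Fin (n+1) => Bool)) (_, v) = Fin.cons _ v from rfl,
      ofFn_cons] <;> rfl

lemma lvl_G_succ (n : ℕ) : lvl Gf n = lvl Ff n + lvl Gf (n+1) := by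
  rw [lvl_succ, lvl, lvl]
  rw [Finset.sum_congr rfl (fun v _ => Gf_tel (e_mem (List.ofFn v)))]
  rw [Finset.sum_add_distrib, Finset.sum_add_distrib]
  ring

lemma lvl_P_succ (n : ℕ) : lvl Pf (n+1) = lvl Pf n := by
  rw [lvl_succ, lvl]
  rw [Finset.sum_congr rfl (fun v _ => (Pf_tel (e_mem (List.ofFn v))))]
  rw [Finset.sum_add_distrib]

lemma lvl_D_succ (n : ℕ) : lvl Df (n+1) = lvl Df n := by
  rw [lvl_succ, lvl]
  rw [Finset.sum_congr rfl (fun v _ => (Df_tel (e_mem (List.ofFn v))))]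
  rw [Finset.sum_add_distrib]

lemma lvl_zero (f : P → ℝ) : lvl f 0 = f root := by
  haveI : Unique (Fin 0 → Bool) := ⟨⟨fun i => i.elim0⟩, fun v => funext fun i => i.elim0⟩
  rw [lvl, Fintype.sum_unique]
  rw [List.ofFn_zero]
  rfl

lemma lvl_P_eq (n : ℕ) : lvl Pf n = Real.log 3 / 32 := by
  induction n with
  | zero =>
      rw [lvl_zero]
      show (1/32 : ℝ) * (Real.log (2 + ((1:ℤ):ℝ)/((1:ℤ):ℝ)) - Real.log (2 - ((1:ℤ):ℝ)/((1:ℤ):ℝ))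
        - Real.log (2 + ((0:ℤ):ℝ)/((1:ℤ):ℝ)) + Real.log (2 - ((0:ℤ):ℝ)/((1:ℤ):ℝ)))
        = Real.log 3 / 32
      norm_num
      ring
  | succ n ih => rw [lvl_P_succ, ih]

lemma lvl_D_eq (n : ℕ) : lvl Df n = 1 := by
  induction n with
  | zero =>
      rw [lvl_zero]
      show 1 / (((1:ℤ):ℝ) * ((1:ℤ):ℝ)) = 1
      norm_num
  | succ n ih => rw [lvl_D_succ, ih]

lemma lvl_G_zero : lvl Gf 0 = 1/24 := by
  rw [lvl_zero]
  show (1/16 : ℝ) * (1/((2*((1:ℤ):ℝ) - ((0:ℤ):ℝ))*(2*((1:ℤ):ℝ) + ((1:ℤ):ℝ))) +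
    1/((2*((1:ℤ):ℝ) + ((0:ℤ):ℝ))*(2*((1:ℤ):ℝ) - ((1:ℤ):ℝ)))) = 1/24
  norm_num

lemma lvl_G_bound (n : ℕ) : |lvl Gf n - Real.log 3 / 32| ≤ 1/(8*((n:ℝ)+2)) := by
  have h1 : lvl Gf n - Real.log 3 / 32 = ∑ v : Fin n → Bool,
      (Gf (e (List.ofFn v)) - Pf (e (List.ofFn v))) := by
    rw [Finset.sum_sub_distrib]
    rw [← lvl, ← lvl, lvl_P_eq]
  rw [h1]
  calc |∑ v : Fin n → Bool, (Gf (e (List.ofFn v)) - Pf (e (List.ofFn v)))|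
      ≤ ∑ v : Fin n → Bool, |Gf (e (List.ofFn v)) - Pf (e (List.ofFn v))| :=
        Finset.abs_sum_le_sum_abs _ _
    _ ≤ ∑ v : Fin n → Bool, (2/((n:ℝ)+2)) * ((1/16) * Df (e (List.ofFn v))) := by
        apply Finset.sum_le_sum
        intro v _
        have hmem := e_mem (List.ofFn v)
        have hb := Gf_sub_Pf_bound hmem
        have hd := Df_le hmem n (by
          have := e_depth (List.ofFn v)
          rwa [List.length_ofFn] at this)
        have hdp := Df_pos hmem
        calc |Gf (e (List.ofFn v)) - Pf (e (List.ofFn v))| ≤ (1/16) * Df (e (List.ofFn v))^2 := hb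
          _ ≤ (2/((n:ℝ)+2)) * ((1/16) * Df (e (List.ofFn v))) := by nlinarith
    _ = (2/((n:ℝ)+2)) * ((1/16) * lvl Df n) := by
        rw [← Finset.mul_sum, lvl, ← Finset.mul_sum]
    _ = 1/(8*((n:ℝ)+2)) := by
        rw [lvl_D_eq]
        field_simp
        ring

lemma lvl_G_tendsto : Filter.Tendsto (fun n => lvl Gf n) Filter.atTop (nhds (Real.log 3 / 32)) := by
  rw [tendsto_iff_dist_tendsto_zero]
  have h8 : Filter.Tendsto (fun n : ℕ => 8*((n:ℝ)+2)) Filter.atTop Filter.atTop := by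
    apply Filter.Tendsto.const_mul_atTop (by norm_num : (0:ℝ) < 8)
    exact Filter.tendsto_atTop_add_const_right _ 2 (tendsto_natCast_atTop_atTop (R := ℝ))
  have hb : Filter.Tendsto (fun n : ℕ => (8*((n:ℝ)+2))⁻¹) Filter.atTop (nhds 0) :=
    h8.inv_tendsto_atTop
  apply squeeze_zero (fun n => dist_nonneg) (fun n => ?_) hb
  rw [Real.dist_eq, ← one_div]
  exact lvl_G_bound n

lemma lvl_F_partial (N : ℕ) :
    ∑ k ∈ Finset.range N, lvl Ff k = lvl Gf 0 - lvl Gf N := by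
  induction N with
  | zero => simp
  | succ N ih =>
      rw [Finset.sum_range_succ, ih]
      have := lvl_G_succ N
      linarith

lemma lvl_F_hasSum : HasSum (fun n => lvl Ff n) (1/24 - Real.log 3 / 32) := by
  rw [hasSum_iff_tendsto_nat_of_nonneg (fun n => by
    apply Finset.sum_nonneg
    intro v _
    exact Ff_nonneg (e_mem _))]
  have : (fun N => ∑ k ∈ Finset.range N, lvl Ff k) = fun N => lvl Gf 0 - lvl Gf N := by
    funext N; exact lvl_F_partial N
  rw [this, lvl_G_zero]
  exact Filter.Tendsto.const_sub _ lvl_G_tendsto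

/-! ### Assembly -/

noncomputable def σf : (Σ n : ℕ, Fin n → Bool) → ℝ := fun q => Ff (e (List.ofFn q.2))

lemma σf_hasSum : HasSum σf (1/24 - Real.log 3 / 32) := by
  have hfib : ∀ n : ℕ, HasSum (fun v : Fin n → Bool => σf ⟨n, v⟩) (lvl Ff n) :=
    fun n => hasSum_fintype _
  have hnn : ∀ q, 0 ≤ σf q := fun ⟨n, v⟩ => Ff_nonneg (e_mem _)
  have hsummable : Summable σf := by
    rw [summable_sigma_of_nonneg hnn]
    refine ⟨fun n => (hfib n).summable, ?_⟩
    apply Summable.congr lvl_F_hasSum.summable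
    intro n
    exact ((hfib n).tsum_eq).symm
  exact HasSum.sigma_of_hasSum lvl_F_hasSum hfib hsummable

noncomputable def eT : List Bool ≃ T :=
  Equiv.ofBijective (fun l => (⟨e l, e_mem l⟩ : T))
    ⟨fun l1 l2 h => e_injective (congrArg Subtype.val h),
     fun q => (e_surjective q.1 q.2).imp fun l hl => Subtype.ext hl⟩

noncomputable def Esig : (Σ n : ℕ, Fin n → Bool) ≃ T :=
  (List.equivSigmaTuple (α := Bool)).symm.trans eT

end Stmt12


theorem stmt_12 :
    HasSum
      (fun p : T =>
        1 / ((4 * (p.val.1 : ℝ) ^ 2 - (p.val.2.1 : ℝ) ^ 2) *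
          (4 * (p.val.2.2.1 : ℝ) ^ 2 - (p.val.2.2.2 : ℝ) ^ 2) *
          (4 * ((p.val.1 : ℝ) + (p.val.2.2.1 : ℝ)) ^ 2 -
            ((p.val.2.1 : ℝ) + (p.val.2.2.2 : ℝ)) ^ 2)))
      ((4 / 3 - Real.log 3) / 32) := by
  rw [show ((4:ℝ)/3 - Real.log 3)/32 = 1/24 - Real.log 3 / 32 by ring]
  refine Stmt12.Esig.hasSum_iff.1 ?_
  have heq : (fun p : T =>
        1 / ((4 * (p.val.1 : ℝ) ^ 2 - (p.val.2.1 : ℝ) ^ 2) *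
          (4 * (p.val.2.2.1 : ℝ) ^ 2 - (p.val.2.2.2 : ℝ) ^ 2) *
          (4 * ((p.val.1 : ℝ) + (p.val.2.2.1 : ℝ)) ^ 2 -
            ((p.val.2.1 : ℝ) + (p.val.2.2.2 : ℝ)) ^ 2))) ∘ ⇑Stmt12.Esig = Stmt12.σf := by
    funext q
    obtain ⟨n, v⟩ := q
    rfl
  rw [heq]
  exact Stmt12.σf_hasSum
end

section
/- The series whose terms are (1/( a²·c²·(a+c)² ))·( b²/a² + d²/c² + (b+d)²/(a+c)² ), summed over all quadruples (a,b,c,d) of nonnegative integers with a ≥ b, c ≥ d and a·d − b·c = 1, converges and its sum equals 2/5. -/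
namespace S13

abbrev St := ℤ × ℤ × ℤ × ℤ

def Lc (p : St) : St := (p.1, p.2.1, p.1 + p.2.2.1, p.2.1 + p.2.2.2)
def Rc (p : St) : St := (p.1 + p.2.2.1, p.2.1 + p.2.2.2, p.2.2.1, p.2.2.2)

noncomputable def fR (p : St) : ℝ :=
  (1 / ((p.1 : ℝ) ^ 2 * (p.2.2.1 : ℝ) ^ 2 * ((p.1 : ℝ) + (p.2.2.1 : ℝ)) ^ 2)) *
    ((p.2.1 : ℝ) ^ 2 / (p.1 : ℝ) ^ 2 + (p.2.2.2 : ℝ) ^ 2 / (p.2.2.1 : ℝ) ^ 2 +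
      ((p.2.1 : ℝ) + (p.2.2.2 : ℝ)) ^ 2 / ((p.1 : ℝ) + (p.2.2.1 : ℝ)) ^ 2)

noncomputable def GR (p : St) : ℝ :=
  (p.2.1 : ℝ) * (p.2.2.2 : ℝ) / ((p.1 : ℝ) * (p.2.2.1 : ℝ)) ^ 4 +
    2 / 5 / ((p.1 : ℝ) * (p.2.2.1 : ℝ)) ^ 5

structure Good (p : St) : Prop where
  ha : 1 ≤ p.1
  hb0 : 0 ≤ p.2.1
  hba : p.2.1 ≤ p.1
  hc : 1 ≤ p.2.2.1
  hd0 : 0 ≤ p.2.2.2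
  hdc : p.2.2.2 ≤ p.2.2.1
  hdet : p.1 * p.2.2.2 - p.2.1 * p.2.2.1 = 1

lemma fR_nonneg (p : St) : 0 ≤ fR p := by
  unfold fR; positivity

lemma good_Lc {p : St} (h : Good p) : Good (Lc p) := by
  obtain ⟨a, b, c, d⟩ := p
  obtain ⟨h1, h2, h3, h4, h5, h6, h7⟩ := h
  dsimp at h1 h2 h3 h4 h5 h6 h7
  exact ⟨h1, h2, h3, show (1 : ℤ) ≤ a + c by omega, show (0 : ℤ) ≤ b + d by omega,
    show b + d ≤ a + c by omega,
    show a * (b + d) - b * (a + c) = 1 by linear_combination h7⟩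

lemma good_Rc {p : St} (h : Good p) : Good (Rc p) := by
  obtain ⟨a, b, c, d⟩ := p
  obtain ⟨h1, h2, h3, h4, h5, h6, h7⟩ := h
  dsimp at h1 h2 h3 h4 h5 h6 h7
  exact ⟨show (1 : ℤ) ≤ a + c by omega, show (0 : ℤ) ≤ b + d by omega,
    show b + d ≤ a + c by omega, h4, h5, h6,
    show (a + c) * d - (b + d) * c = 1 by linear_combination h7⟩

lemma good_mem_T {p : St} (h : Good p) : p ∈ T :=
  ⟨h.hba, h.hb0, h.hdc, h.hd0, h.hdet⟩

lemma good_of_mem_T {p : St} (h : p ∈ T) : Good p := by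
  obtain ⟨a, b, c, d⟩ := p
  obtain ⟨h1, h2, h3, h4, h5⟩ := h
  dsimp at *
  refine ⟨?_, h2, h1, ?_, h4, h3, h5⟩
  · rcases lt_or_ge a 1 with h | h
    · exfalso
      have ha : a = 0 := by omega
      have hb : b = 0 := by omega
      rw [ha, hb] at h5; simp at h5
    · exact h
  · rcases lt_or_ge c 1 with h | h
    · exfalso
      have hc : c = 0 := by omega
      have hd : d = 0 := by omega
      rw [hc, hd] at h5; simp at h5
    · exact h

lemma tele_real (A B C D : ℝ) (hA : A ≠ 0) (hC : C ≠ 0) (hAC : A + C ≠ 0)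
    (hE : A * D - B * C = 1) :
    B * (B + D) / (A * (A + C)) ^ 4 + 2 / 5 / (A * (A + C)) ^ 5
      + ((B + D) * D / ((A + C) * C) ^ 4 + 2 / 5 / ((A + C) * C) ^ 5)
      + (1 / (A ^ 2 * C ^ 2 * (A + C) ^ 2)) *
          (B ^ 2 / A ^ 2 + D ^ 2 / C ^ 2 + (B + D) ^ 2 / (A + C) ^ 2)
      = B * D / (A * C) ^ 4 + 2 / 5 / (A * C) ^ 5 := by
  have hD : D = (1 + B * C) / A := by field_simp; linarith
  subst hD
  field_simp
  ring

lemma tele_pt {p : St} (h : Good p) : GR (Lc p) + GR (Rc p) + fR p = GR p := by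
  obtain ⟨a, b, c, d⟩ := p
  have h1 := h.ha
  have h4 := h.hc
  have h7 := h.hdet
  dsimp at h1 h4 h7
  have hA : (a : ℝ) ≠ 0 := Int.cast_ne_zero.mpr (by omega)
  have hC : (c : ℝ) ≠ 0 := Int.cast_ne_zero.mpr (by omega)
  have hAC : (a : ℝ) + (c : ℝ) ≠ 0 := by
    have : ((a + c : ℤ) : ℝ) ≠ 0 := Int.cast_ne_zero.mpr (by omega)
    push_cast at this; exact this
  have hE : (a : ℝ) * (d : ℝ) - (b : ℝ) * (c : ℝ) = 1 := by
    have := congrArg (fun z : ℤ => (z : ℝ)) h7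
    push_cast at this; linarith
  simp only [GR, fR, Lc, Rc]
  push_cast
  linear_combination tele_real (a : ℝ) (b : ℝ) (c : ℝ) (d : ℝ) hA hC hAC hE

lemma GR_nonneg {p : St} (h : Good p) : 0 ≤ GR p := by
  obtain ⟨a, b, c, d⟩ := p
  obtain ⟨h1, h2, h3, h4, h5, h6, h7⟩ := h
  dsimp at h1 h2 h3 h4 h5 h6 h7
  have hb : (0 : ℝ) ≤ (b : ℝ) := by exact_mod_cast h2
  have hd : (0 : ℝ) ≤ (d : ℝ) := by exact_mod_cast h5
  have hac : (0 : ℝ) < (a : ℝ) * (c : ℝ) := by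
    have : (0 : ℤ) < a * c := mul_pos (by omega) (by omega)
    exact_mod_cast this
  show (0 : ℝ) ≤ (b : ℝ) * (d : ℝ) / ((a : ℝ) * (c : ℝ)) ^ 4 +
    2 / 5 / ((a : ℝ) * (c : ℝ)) ^ 5
  have e1 : (0 : ℝ) ≤ (b : ℝ) * (d : ℝ) / ((a : ℝ) * (c : ℝ)) ^ 4 :=
    div_nonneg (mul_nonneg hb hd) (pow_pos hac 4).le
  have e2 : (0 : ℝ) ≤ 2 / 5 / ((a : ℝ) * (c : ℝ)) ^ 5 :=
    div_nonneg (by norm_num) (pow_pos hac 5).le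
  linarith

def lv : ℕ → Finset St
  | 0 => {((1 : ℤ), (0 : ℤ), (1 : ℤ), (1 : ℤ))}
  | n + 1 => (lv n).image Lc ∪ (lv n).image Rc

lemma good_lv : ∀ n, ∀ p ∈ lv n, Good p ∧ (n : ℤ) + 2 ≤ p.1 + p.2.2.1 := by
  intro n
  induction n with
  | zero =>
    intro p hp
    simp only [lv, Finset.mem_singleton] at hp
    subst hp
    exact ⟨⟨by norm_num, by norm_num, by norm_num, by norm_num, by norm_num, by norm_num,
      by norm_num⟩, by norm_num⟩
  | succ n ih =>
    intro p hp
    simp only [lv, Finset.mem_union, Finset.mem_image] at hp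
    rcases hp with ⟨q, hq, rfl⟩ | ⟨q, hq, rfl⟩
    · obtain ⟨hg, hs⟩ := ih q hq
      refine ⟨good_Lc hg, ?_⟩
      have h1 := hg.ha
      show ((n : ℤ) + 1) + 2 ≤ q.1 + (q.1 + q.2.2.1)
      omega
    · obtain ⟨hg, hs⟩ := ih q hq
      refine ⟨good_Rc hg, ?_⟩
      have h4 := hg.hc
      show ((n : ℤ) + 1) + 2 ≤ (q.1 + q.2.2.1) + q.2.2.1
      omega

lemma Lc_inj : Function.Injective Lc := by
  intro p q h
  obtain ⟨a, b, c, d⟩ := p; obtain ⟨a', b', c', d'⟩ := q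
  simp only [Lc, Prod.ext_iff] at h ⊢
  omega

lemma Rc_inj : Function.Injective Rc := by
  intro p q h
  obtain ⟨a, b, c, d⟩ := p; obtain ⟨a', b', c', d'⟩ := q
  simp only [Rc, Prod.ext_iff] at h ⊢
  omega

lemma mem_image_Lc_lt {n : ℕ} {p : St} (hp : p ∈ (lv n).image Lc) : p.1 < p.2.2.1 := by
  simp only [Finset.mem_image] at hp
  obtain ⟨q, hq, rfl⟩ := hp
  have h4 := ((good_lv n q hq).1).hc
  show q.1 < q.1 + q.2.2.1
  omega

lemma mem_image_Rc_gt {n : ℕ} {p : St} (hp : p ∈ (lv n).image Rc) : p.2.2.1 < p.1 := by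
  simp only [Finset.mem_image] at hp
  obtain ⟨q, hq, rfl⟩ := hp
  have h1 := ((good_lv n q hq).1).ha
  show q.2.2.1 < q.1 + q.2.2.1
  omega

lemma lv_disj (n : ℕ) : Disjoint ((lv n).image Lc) ((lv n).image Rc) := by
  rw [Finset.disjoint_left]
  intro p h1 h2
  exact absurd (mem_image_Lc_lt h1) (not_lt.mpr (le_of_lt (mem_image_Rc_gt h2)))

lemma sum_lv_succ (h : St → ℝ) (n : ℕ) :
    ∑ p ∈ lv (n + 1), h p = ∑ p ∈ lv n, (h (Lc p) + h (Rc p)) := by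
  show ∑ p ∈ (lv n).image Lc ∪ (lv n).image Rc, h p = _
  rw [Finset.sum_union (lv_disj n),
    Finset.sum_image (fun x _ y _ e => Lc_inj e),
    Finset.sum_image (fun x _ y _ e => Rc_inj e),
    ← Finset.sum_add_distrib]

lemma sum_inv_lv : ∀ n, ∑ p ∈ lv n, 1 / ((p.1 : ℝ) * (p.2.2.1 : ℝ)) = 1 := by
  intro n
  induction n with
  | zero => simp [lv]
  | succ n ih =>
    rw [sum_lv_succ]
    have he : ∀ p ∈ lv n,
        (1 / (((Lc p).1 : ℝ) * ((Lc p).2.2.1 : ℝ)) + 1 / (((Rc p).1 : ℝ) * ((Rc p).2.2.1 : ℝ)))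
          = 1 / ((p.1 : ℝ) * (p.2.2.1 : ℝ)) := by
      intro p hp
      have hg := (good_lv n p hp).1
      obtain ⟨a, b, c, d⟩ := p
      have h1 := hg.ha; have h4 := hg.hc
      dsimp at h1 h4
      have hA : (0 : ℝ) < (a : ℝ) := by exact_mod_cast (by omega : (0:ℤ) < a)
      have hC : (0 : ℝ) < (c : ℝ) := by exact_mod_cast (by omega : (0:ℤ) < c)
      show 1 / ((a : ℝ) * (((a : ℤ) + c : ℤ) : ℝ)) + 1 / ((((a : ℤ) + c : ℤ) : ℝ) * (c : ℝ))
        = 1 / ((a : ℝ) * (c : ℝ))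
      push_cast
      have hAC : (0 : ℝ) < (a : ℝ) + (c : ℝ) := by linarith
      field_simp
      ring
    rw [Finset.sum_congr rfl he, ih]

lemma sum_G_lv : ∀ n, ∑ p ∈ lv n, GR p = 2 / 5 - ∑ k ∈ Finset.range n, ∑ p ∈ lv k, fR p := by
  intro n
  induction n with
  | zero => norm_num [lv, GR]
  | succ n ih =>
    rw [sum_lv_succ, Finset.sum_range_succ]
    have he : ∑ p ∈ lv n, (GR (Lc p) + GR (Rc p)) = ∑ p ∈ lv n, (GR p - fR p) := by
      apply Finset.sum_congr rfl
      intro p hp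
      have := tele_pt (good_lv n p hp).1
      linarith
    rw [he, Finset.sum_sub_distrib, ih]
    ring

lemma sum_G_nonneg (n : ℕ) : 0 ≤ ∑ p ∈ lv n, GR p :=
  Finset.sum_nonneg fun p hp => GR_nonneg (good_lv n p hp).1

lemma sum_G_le (n : ℕ) : ∑ p ∈ lv n, GR p ≤ 7 / 5 * (1 / ((n : ℝ) + 1)) := by
  have key : ∀ p ∈ lv n,
      GR p ≤ 7 / 5 * (1 / ((n : ℝ) + 1)) * (1 / ((p.1 : ℝ) * (p.2.2.1 : ℝ))) := by
    intro p hp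
    obtain ⟨hg, hs⟩ := good_lv n p hp
    obtain ⟨a, b, c, d⟩ := p
    obtain ⟨h1, h2, h3, h4, h5, h6, h7⟩ := hg
    dsimp at h1 h2 h3 h4 h5 h6 h7 hs ⊢
    have hacZ : (n : ℤ) + 1 ≤ a * c := by
      nlinarith [mul_nonneg (by omega : (0:ℤ) ≤ a - 1) (by omega : (0:ℤ) ≤ c - 1)]
    have hbdZ : b * d ≤ a * c := mul_le_mul h3 h6 h5 (by omega)
    have hac : ((n : ℝ) + 1) ≤ (a : ℝ) * (c : ℝ) := by exact_mod_cast hacZ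
    have hbd : (b : ℝ) * (d : ℝ) ≤ (a : ℝ) * (c : ℝ) := by exact_mod_cast hbdZ
    have hbd0 : (0 : ℝ) ≤ (b : ℝ) * (d : ℝ) := by
      have : (0 : ℤ) ≤ b * d := mul_nonneg h2 h5
      exact_mod_cast this
    have ht1 : (1 : ℝ) ≤ (a : ℝ) * (c : ℝ) := by
      have : (1 : ℤ) ≤ a * c := by nlinarith
      exact_mod_cast this
    have hn1 : (0 : ℝ) < (n : ℝ) + 1 := by positivity
    show (b : ℝ) * (d : ℝ) / ((a : ℝ) * (c : ℝ)) ^ 4 + 2 / 5 / ((a : ℝ) * (c : ℝ)) ^ 5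
      ≤ 7 / 5 * (1 / ((n : ℝ) + 1)) * (1 / ((a : ℝ) * (c : ℝ)))
    set t : ℝ := (a : ℝ) * (c : ℝ) with htdef
    have ht0 : (0 : ℝ) < t := by linarith
    have e1 : (b : ℝ) * (d : ℝ) / t ^ 4 ≤ 1 / (((n : ℝ) + 1) * t) := by
      rw [div_le_div_iff₀ (pow_pos ht0 4) (mul_pos hn1 ht0)]
      have hb1 : (b : ℝ) * (d : ℝ) * ((n : ℝ) + 1) ≤ t * t :=
        mul_le_mul hbd hac hn1.le ht0.le
      nlinarith [mul_le_mul_of_nonneg_right hb1 ht0.le,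
        mul_nonneg (mul_nonneg ht0.le ht0.le) (mul_nonneg ht0.le (by linarith : (0:ℝ) ≤ t - 1))]
    have e2 : 2 / 5 / t ^ 5 ≤ 2 / 5 / (((n : ℝ) + 1) * t) := by
      rw [div_le_div_iff₀ (pow_pos ht0 5) (mul_pos hn1 ht0)]
      have h2' : ((n : ℝ) + 1) * t ≤ t * t := mul_le_mul_of_nonneg_right hac ht0.le
      nlinarith [h2', mul_nonneg (mul_nonneg ht0.le ht0.le)
        (mul_nonneg (by linarith : (0:ℝ) ≤ t - 1) (by positivity : (0:ℝ) ≤ t * t + t + 1))]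
    have hfin : 1 / (((n : ℝ) + 1) * t) + 2 / 5 / (((n : ℝ) + 1) * t)
        = 7 / 5 * (1 / ((n : ℝ) + 1)) * (1 / t) := by
      field_simp
      ring
    linarith
  calc ∑ p ∈ lv n, GR p
      ≤ ∑ p ∈ lv n, 7 / 5 * (1 / ((n : ℝ) + 1)) * (1 / ((p.1 : ℝ) * (p.2.2.1 : ℝ))) :=
        Finset.sum_le_sum key
    _ = 7 / 5 * (1 / ((n : ℝ) + 1)) := by
        rw [← Finset.mul_sum, sum_inv_lv, mul_one]

lemma root_notMem_succ (n : ℕ) : ((1 : ℤ), (0 : ℤ), (1 : ℤ), (1 : ℤ)) ∉ lv (n + 1) := by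
  intro h
  simp only [lv, Finset.mem_union] at h
  rcases h with h | h
  · exact absurd (mem_image_Lc_lt h) (by norm_num)
  · exact absurd (mem_image_Rc_gt h) (by norm_num)

lemma lv_level_unique : ∀ m {n : ℕ} {p : St}, p ∈ lv m → p ∈ lv n → m = n := by
  intro m
  induction m with
  | zero =>
    intro n p hm hn
    simp only [lv, Finset.mem_singleton] at hm
    subst hm
    cases n with
    | zero => rfl
    | succ k => exact absurd hn (root_notMem_succ k)
  | succ m ih =>
    intro n p hm hn
    cases n with
    | zero =>
      simp only [lv, Finset.mem_singleton] at hn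
      subst hn
      exact absurd hm (root_notMem_succ m)
    | succ k =>
      have hm' : p ∈ (lv m).image Lc ∪ (lv m).image Rc := hm
      have hn' : p ∈ (lv k).image Lc ∪ (lv k).image Rc := hn
      rcases Finset.mem_union.mp hm' with hm2 | hm2 <;>
        rcases Finset.mem_union.mp hn' with hn2 | hn2
      · obtain ⟨q, hq, hq'⟩ := Finset.mem_image.mp hm2
        obtain ⟨r, hr, hr'⟩ := Finset.mem_image.mp hn2
        have heq : q = r := Lc_inj (hq'.trans hr'.symm)
        subst heq
        rw [ih hq hr]
      · exact absurd (mem_image_Lc_lt hm2) (not_lt.mpr (le_of_lt (mem_image_Rc_gt hn2)))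
      · exact absurd (mem_image_Lc_lt hn2) (not_lt.mpr (le_of_lt (mem_image_Rc_gt hm2)))
      · obtain ⟨q, hq, hq'⟩ := Finset.mem_image.mp hm2
        obtain ⟨r, hr, hr'⟩ := Finset.mem_image.mp hn2
        have heq : q = r := Rc_inj (hq'.trans hr'.symm)
        subst heq
        rw [ih hq hr]

lemma exists_lv : ∀ (N : ℕ) (p : St), Good p → p.1 + p.2.2.1 ≤ (N : ℤ) → ∃ n, p ∈ lv n := by
  intro N
  induction N with
  | zero =>
    intro p hg hle
    have := hg.ha; have := hg.hc
    omega
  | succ N ih =>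
    intro p hg hle
    obtain ⟨a, b, c, d⟩ := p
    obtain ⟨h1, h2, h3, h4, h5, h6, h7⟩ := hg
    dsimp at h1 h2 h3 h4 h5 h6 h7 hle ⊢
    rcases lt_trichotomy a c with hlt | heq | hgt
    · -- p = Lc (a, b, c - a, d - b)
      have hdb0 : 0 ≤ d - b := by nlinarith
      have hdb : d - b ≤ c - a := by
        by_contra hcon
        push_neg at hcon
        have hh : (0 : ℤ) ≤ d - b - c + a - 1 := by omega
        nlinarith [mul_nonneg (by omega : (0:ℤ) ≤ a) hh,
          mul_nonneg (by omega : (0:ℤ) ≤ a - 1) hh,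
          mul_nonneg (by omega : (0:ℤ) ≤ a - b) (by omega : (0:ℤ) ≤ c - a - 1)]
      have hgq : Good (a, b, c - a, d - b) :=
        ⟨h1, h2, h3, show (1:ℤ) ≤ c - a by omega, hdb0, hdb,
          show a * (d - b) - b * (c - a) = 1 by linear_combination h7⟩
      obtain ⟨n, hn⟩ := ih (a, b, c - a, d - b) hgq (show a + (c - a) ≤ (N : ℤ) by omega)
      refine ⟨n + 1, ?_⟩
      have : ((a, b, c, d) : St) = Lc (a, b, c - a, d - b) := by
        simp [Lc, Prod.ext_iff] <;> omega
      rw [this]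
      exact Finset.mem_union_left _ (Finset.mem_image_of_mem Lc hn)
    · -- p is the root
      have hd1 : 0 < d - b := by nlinarith
      have h2' : a * (d - b) = 1 := by linear_combination h7 - b * heq
      have ha1 : a = 1 := by
        have hle1 : a ≤ 1 := by
          nlinarith [mul_le_mul_of_nonneg_left (show (1:ℤ) ≤ d - b by omega)
            (show (0:ℤ) ≤ a by omega)]
        omega
      have hc1 : c = 1 := by omega
      have hdb : d - b = 1 := by rw [ha1, one_mul] at h2'; omega
      have hpe : ((a, b, c, d) : St) = (1, 0, 1, 1) := by
        simp only [Prod.ext_iff]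
        exact ⟨ha1, by omega, hc1, by omega⟩
      exact ⟨0, by rw [hpe]; simp [lv]⟩
    · -- p = Rc (a - c, b - d, c, d)
      have hbd0 : 0 ≤ b - d := by
        by_contra hcon
        push_neg at hcon
        nlinarith [mul_nonneg (by omega : (0:ℤ) ≤ a) (by omega : (0:ℤ) ≤ d - b - 1),
          mul_nonneg (by omega : (0:ℤ) ≤ a - c) h2]
      have hbd : b - d ≤ a - c := by
        by_contra hcon
        push_neg at hcon
        nlinarith [mul_nonneg (by omega : (0:ℤ) ≤ c) (by omega : (0:ℤ) ≤ b - d - a + c - 1),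
          mul_nonneg (by omega : (0:ℤ) ≤ a - c) (by omega : (0:ℤ) ≤ c - d)]
      have hgq : Good (a - c, b - d, c, d) :=
        ⟨show (1:ℤ) ≤ a - c by omega, hbd0, hbd, h4, h5, h6,
          show (a - c) * d - (b - d) * c = 1 by linear_combination h7⟩
      obtain ⟨n, hn⟩ := ih (a - c, b - d, c, d) hgq (show (a - c) + c ≤ (N : ℤ) by omega)
      refine ⟨n + 1, ?_⟩
      have : ((a, b, c, d) : St) = Rc (a - c, b - d, c, d) := by
        simp [Rc, Prod.ext_iff] <;> omega
      rw [this]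
      exact Finset.mem_union_right _ (Finset.mem_image_of_mem Rc hn)

def tn (n : ℕ) : Finset St := (Finset.range n).biUnion lv

lemma tn_mono {m n : ℕ} (h : m ≤ n) : tn m ⊆ tn n :=
  Finset.biUnion_subset_biUnion_of_subset_left lv (Finset.range_subset_range.mpr h)

lemma mem_tn {p : St} (hp : p ∈ T) : ∃ n, p ∈ tn n := by
  obtain ⟨k, hk⟩ := exists_lv (p.1 + p.2.2.1).toNat p (good_of_mem_T hp)
    (by have := (good_of_mem_T hp).ha; have := (good_of_mem_T hp).hc; omega)
  exact ⟨k + 1, Finset.mem_biUnion.mpr ⟨k, Finset.self_mem_range_succ k, hk⟩⟩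

lemma sum_tn (h : St → ℝ) (n : ℕ) :
    ∑ p ∈ tn n, h p = ∑ k ∈ Finset.range n, ∑ p ∈ lv k, h p := by
  apply Finset.sum_biUnion
  intro i _ j _ hij
  simp only [Function.onFun]
  rw [Finset.disjoint_left]
  intro p hpi hpj
  exact hij (lv_level_unique i hpi hpj)

lemma good_tn {n : ℕ} {p : St} (hp : p ∈ tn n) : Good p := by
  obtain ⟨k, _, hk⟩ := Finset.mem_biUnion.mp hp
  exact (good_lv k p hk).1

lemma sum_fR_tn (n : ℕ) : ∑ p ∈ tn n, fR p = 2 / 5 - ∑ p ∈ lv n, GR p := by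
  rw [sum_tn, sum_G_lv]
  ring

instance : DecidablePred (· ∈ T) := fun p =>
  decidable_of_iff
    (p.2.1 ≤ p.1 ∧ 0 ≤ p.2.1 ∧ p.2.2.2 ≤ p.2.2.1 ∧ 0 ≤ p.2.2.2 ∧
      p.1 * p.2.2.2 - p.2.1 * p.2.2.1 = 1) Iff.rfl

noncomputable def sn (n : ℕ) : Finset T := (tn n).subtype (· ∈ T)

lemma sum_sn (n : ℕ) : ∑ p ∈ sn n, fR p.val = ∑ p ∈ tn n, fR p :=
  Finset.sum_subtype_of_mem fR fun x hx => good_mem_T (good_tn hx)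

end S13

open S13 in
set_option maxHeartbeats 1000000 in
theorem stmt_13 :
    HasSum
      (fun p : T =>
        (1 / ((p.val.1 : ℝ) ^ 2 * (p.val.2.2.1 : ℝ) ^ 2 *
            ((p.val.1 : ℝ) + (p.val.2.2.1 : ℝ)) ^ 2)) *
          ((p.val.2.1 : ℝ) ^ 2 / (p.val.1 : ℝ) ^ 2 +
            (p.val.2.2.2 : ℝ) ^ 2 / (p.val.2.2.1 : ℝ) ^ 2 +
            ((p.val.2.1 : ℝ) + (p.val.2.2.2 : ℝ)) ^ 2 /
              ((p.val.1 : ℝ) + (p.val.2.2.1 : ℝ)) ^ 2))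
      (2 / 5) := by
  have hfun : (fun p : T =>
        (1 / ((p.val.1 : ℝ) ^ 2 * (p.val.2.2.1 : ℝ) ^ 2 *
            ((p.val.1 : ℝ) + (p.val.2.2.1 : ℝ)) ^ 2)) *
          ((p.val.2.1 : ℝ) ^ 2 / (p.val.1 : ℝ) ^ 2 +
            (p.val.2.2.2 : ℝ) ^ 2 / (p.val.2.2.1 : ℝ) ^ 2 +
            ((p.val.2.1 : ℝ) + (p.val.2.2.2 : ℝ)) ^ 2 /
              ((p.val.1 : ℝ) + (p.val.2.2.1 : ℝ)) ^ 2))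
      = fun p : T => fR p.val := by
    funext p
    rfl
  rw [hfun]
  apply hasSum_of_isLUB_of_nonneg (2 / 5 : ℝ) (fun p : T => fR_nonneg p.val)
  constructor
  · -- upper bound
    rintro x ⟨s, rfl⟩
    have hex : ∃ n, ∀ p ∈ s, (p : St) ∈ tn n := by
      classical
      refine Finset.induction_on s ⟨0, by simp⟩ ?_
      rintro q s' hq ⟨n, hn⟩
      obtain ⟨m, hm⟩ := mem_tn q.2
      refine ⟨max n m, ?_⟩
      intro p hp
      rcases Finset.mem_insert.mp hp with rfl | hp
      · exact tn_mono (le_max_right n m) hm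
      · exact tn_mono (le_max_left n m) (hn p hp)
    obtain ⟨n, hn⟩ := hex
    have hsub : s ⊆ sn n := by
      intro p hp
      exact Finset.mem_subtype.mpr (hn p hp)
    calc ∑ p ∈ s, fR p.val
        ≤ ∑ p ∈ sn n, fR p.val :=
          Finset.sum_le_sum_of_subset_of_nonneg hsub fun p _ _ => fR_nonneg p.val
      _ = 2 / 5 - ∑ p ∈ lv n, GR p := by rw [sum_sn, sum_fR_tn]
      _ ≤ 2 / 5 := by linarith [sum_G_nonneg n]
  · -- least upper bound
    intro b hb
    have hbn : ∀ n : ℕ, 2 / 5 - 7 / 5 * (1 / ((n : ℝ) + 1)) ≤ b := by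
      intro n
      have hmem : (∑ p ∈ sn n, fR p.val) ∈ Set.range fun s : Finset T => ∑ p ∈ s, fR p.val :=
        ⟨sn n, rfl⟩
      have hle := hb hmem
      have heq : ∑ p ∈ sn n, fR p.val = 2 / 5 - ∑ p ∈ lv n, GR p := by rw [sum_sn, sum_fR_tn]
      have := sum_G_le n
      linarith
    by_contra hcon
    push_neg at hcon
    have hpos : (0 : ℝ) < 2 / 5 - b := by linarith
    obtain ⟨n, hn⟩ := exists_nat_gt (7 / 5 / (2 / 5 - b))
    have hn1 : (0 : ℝ) < (n : ℝ) + 1 := by positivity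
    have h2 : 7 / 5 / (2 / 5 - b) < (n : ℝ) + 1 := by linarith
    have h3 : 7 / 5 * (1 / ((n : ℝ) + 1)) < 2 / 5 - b := by
      rw [div_lt_iff₀ hpos] at h2
      rw [mul_one_div, div_lt_iff₀ hn1]
      linarith
    linarith [hbn n]
end

section
/- The series whose terms are 1/( (a·c + b·d)·( a·(a+c) + b·(b+d) )·( (a+c)·c + (b+d)·d ) ), summed over all quadruples (a,b,c,d) of nonnegative integers with a ≥ b, c ≥ d and a·d − b·c = 1, converges and its sum equals 1 − π/4. -/
namespace Stmt14

abbrev Q := ℤ × ℤ × ℤ × ℤ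

def step (x : Bool) (p : Q) : Q :=
  if x then (p.1 + p.2.2.1, p.2.1 + p.2.2.2, p.2.2.1, p.2.2.2)
  else (p.1, p.2.1, p.1 + p.2.2.1, p.2.1 + p.2.2.2)

def node : List Bool → Q
  | [] => (1,0,1,1)
  | x :: l => step x (node l)

def good (p : Q) : Prop :=
  0 ≤ p.2.1 ∧ p.2.1 < p.1 ∧ 0 ≤ p.2.2.2 ∧ p.2.2.2 ≤ p.2.2.1 ∧ 1 ≤ p.2.2.1 ∧
    p.1 * p.2.2.2 - p.2.1 * p.2.2.1 = 1

lemma good_step (x : Bool) (p : Q) (h : good p) : good (step x p) := by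
  obtain ⟨a,b,c,d⟩ := p
  obtain ⟨h1,h2,h3,h4,h5,h6⟩ := h
  simp only [good, step] at *
  cases x <;> simp
  · exact ⟨h1, by omega, by omega, by omega, by omega, by ring_nf; linarith [h6]⟩
  · exact ⟨by omega, by omega, h3, h4, h5, by ring_nf; linarith [h6]⟩

lemma good_node (l : List Bool) : good (node l) := by
  induction l with
  | nil => exact ⟨le_refl 0, one_pos, zero_le_one, le_refl 1, le_refl 1, by norm_num [node]⟩
  | cons x l ih => exact good_step x _ ih

lemma node_mem_T (l : List Bool) : node l ∈ T := by
  obtain ⟨h1,h2,h3,h4,h5,h6⟩ := good_node l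
  exact ⟨h2.le, h1, h4, h3, h6⟩

end Stmt14

namespace Stmt14

lemma step_inj (x : Bool) : Function.Injective (step x) := by
  intro p q h
  obtain ⟨a,b,c,d⟩ := p; obtain ⟨a',b',c',d'⟩ := q
  cases x <;> simp [step, Prod.ext_iff] at h ⊢ <;> omega

lemma node_true (l : List Bool) :
    (node (true :: l)).2.2.1 < (node (true :: l)).1 := by
  have h := good_node l
  obtain ⟨h1,h2,h3,h4,h5,h6⟩ := h
  show (step true (node l)).2.2.1 < (step true (node l)).1
  simp [step]; omega

lemma node_false (l : List Bool) :
    (node (false :: l)).1 < (node (false :: l)).2.2.1 := by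
  have h := good_node l
  obtain ⟨h1,h2,h3,h4,h5,h6⟩ := h
  show (step false (node l)).1 < (step false (node l)).2.2.1
  simp [step]; omega

lemma node_nil_eq : (node []).1 = (node []).2.2.1 := rfl

lemma node_inj : Function.Injective node := by
  intro l1
  induction l1 with
  | nil =>
    intro l2 h
    match l2 with
    | [] => rfl
    | true :: l2 => have := node_true l2; rw [← h] at this; exact absurd node_nil_eq (by omega)
    | false :: l2 => have := node_false l2; rw [← h] at this; exact absurd node_nil_eq (by omega)
  | cons x l1 ih =>
    intro l2 h
    match x, l2 with
    | true, [] => have := node_true l1; rw [h] at this; exact absurd node_nil_eq (by omega)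
    | false, [] => have := node_false l1; rw [h] at this; exact absurd node_nil_eq (by omega)
    | true, true :: l2 => rw [ih (step_inj true h)]
    | false, false :: l2 => rw [ih (step_inj false h)]
    | true, false :: l2 =>
      have h1 := node_true l1; have h2 := node_false l2; rw [h] at h1; omega
    | false, true :: l2 =>
      have h1 := node_false l1; have h2 := node_true l2; rw [h] at h1; omega

lemma node_surj_aux : ∀ n : ℕ, ∀ p ∈ T, p.1 + p.2.2.1 ≤ n → ∃ l, node l = p := by
  intro n
  induction n with
  | zero =>
    intro p hp hle
    obtain ⟨a,b,c,d⟩ := p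
    obtain ⟨h1,h2,h3,h4,h5⟩ := hp
    exfalso; simp at *; nlinarith
  | succ n ih =>
    intro p hp hle
    obtain ⟨a,b,c,d⟩ := p
    obtain ⟨h1,h2,h3,h4,h5⟩ := hp
    simp only at h1 h2 h3 h4 h5 hle ⊢
    have ha : 1 ≤ a := by nlinarith
    have hc : 1 ≤ c := by nlinarith
    rcases lt_trichotomy a c with hac | hac | hac
    · -- left child of (a, b, c-a, d-b)
      have c1 : 0 ≤ d - b := by nlinarith
      have c2 : d - b ≤ c - a := by nlinarith
      obtain ⟨l, hl⟩ := ih (a, b, c - a, d - b) ⟨h1, h2, c2, c1, by ring_nf; linarith [h5]⟩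
        (by simp; omega)
      exact ⟨false :: l, by show step false _ = _; rw [hl]; simp [step]⟩
    · -- root
      have hd1 : 1 ≤ d - b := by nlinarith
      have ha1 : a = 1 := by nlinarith
      have : b = 0 ∧ d = 1 ∧ c = 1 := by constructor; nlinarith; constructor; nlinarith; omega
      obtain ⟨hb, hd, hc'⟩ := this
      exact ⟨[], by simp [node, ha1, hb, hd, hc']⟩
    · -- right child of (a-c, b-d, c, d)
      have c1 : 0 ≤ b - d := by nlinarith
      have c2 : b - d ≤ a - c := by nlinarith
      obtain ⟨l, hl⟩ := ih (a - c, b - d, c, d) ⟨c2, c1, h3, h4, by ring_nf; linarith [h5]⟩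
        (by simp; omega)
      exact ⟨true :: l, by show step true _ = _; rw [hl]; simp [step]⟩

def toT (l : List Bool) : T := ⟨node l, node_mem_T l⟩

lemma toT_bij : Function.Bijective toT := by
  constructor
  · intro l1 l2 h; exact node_inj (congrArg Subtype.val h)
  · rintro ⟨p, hp⟩
    obtain ⟨l, hl⟩ := node_surj_aux (p.1 + p.2.2.1).toNat p hp (by
      have : 0 ≤ p.1 + p.2.2.1 := by
        obtain ⟨h1,h2,h3,h4,h5⟩ := hp; omega
      omega)
    exact ⟨l, Subtype.ext hl⟩

end Stmt14

namespace Stmt14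

open Real

/-- `a*c + b*d`. -/
def U (p : Q) : ℤ := p.1 * p.2.2.1 + p.2.1 * p.2.2.2

lemma U_pos {p : Q} (h : good p) : 1 ≤ U p := by
  obtain ⟨a,b,c,d⟩ := p
  obtain ⟨h1,h2,h3,h4,h5,h6⟩ := h
  simp only [U]
  nlinarith

lemma U_step_false (p : Q) : U (step false p) = U p + p.1^2 + p.2.1^2 := by
  obtain ⟨a,b,c,d⟩ := p; simp [U, step]; ring

lemma U_step_true (p : Q) : U (step true p) = U p + p.2.2.1^2 + p.2.2.2^2 := by
  obtain ⟨a,b,c,d⟩ := p; simp [U, step]; ring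

lemma U_depth (l : List Bool) : (l.length : ℤ) + 1 ≤ U (node l) := by
  induction l with
  | nil => simp [U, node]
  | cons x l ih =>
    have hg := good_node l
    obtain ⟨h1,h2,h3,h4,h5,h6⟩ := hg
    cases x
    · rw [show node (false :: l) = step false (node l) from rfl, U_step_false]
      simp only [List.length_cons]
      push_cast
      nlinarith
    · rw [show node (true :: l) = step true (node l) from rfl, U_step_true]
      simp only [List.length_cons]
      push_cast
      nlinarith

/-- The term of the series, exactly as in the statement. -/
noncomputable def trm (p : Q) : ℝ :=
  1 / (((p.1 : ℝ) * (p.2.2.1 : ℝ) + (p.2.1 : ℝ) * (p.2.2.2 : ℝ)) *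
    ((p.1 : ℝ) * ((p.1 : ℝ) + (p.2.2.1 : ℝ)) + (p.2.1 : ℝ) * ((p.2.1 : ℝ) + (p.2.2.2 : ℝ))) *
    (((p.1 : ℝ) + (p.2.2.1 : ℝ)) * (p.2.2.1 : ℝ) + ((p.2.1 : ℝ) + (p.2.2.2 : ℝ)) * (p.2.2.2 : ℝ)))

lemma trm_eq {p : Q} (h : good p) :
    trm p = 1 / (U p : ℝ) - 1 / (U (step false p) : ℝ) - 1 / (U (step true p) : ℝ) := by
  obtain ⟨a,b,c,d⟩ := p
  obtain ⟨h1,h2,h3,h4,h5,h6⟩ := h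
  have hU : (1:ℤ) ≤ a*c + b*d := U_pos ⟨h1,h2,h3,h4,h5,h6⟩
  have hV : (1:ℤ) ≤ a*(a+c) + b*(b+d) := by nlinarith
  have hW : (1:ℤ) ≤ (a+c)*c + (b+d)*d := by nlinarith
  simp only [trm, U, step]
  have hdet : (a:ℝ)*d - b*c = 1 := by exact_mod_cast h6
  have hU' : (0:ℝ) < (a:ℝ)*c + b*d := by exact_mod_cast lt_of_lt_of_le zero_lt_one hU
  have hV' : (0:ℝ) < (a:ℝ)*(a+c) + b*(b+d) := by push_cast; exact_mod_cast lt_of_lt_of_le zero_lt_one hV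
  have hW' : (0:ℝ) < ((a:ℝ)+c)*c + (b+d)*d := by push_cast; exact_mod_cast lt_of_lt_of_le zero_lt_one hW
  push_cast
  rw [div_sub_div _ _ hU'.ne' hV'.ne', div_sub_div _ _ (mul_pos hU' hV').ne' hW'.ne', div_eq_div_iff (mul_pos (mul_pos hU' hV') hW').ne' (mul_pos (mul_pos hU' hV') hW').ne']
  have hdet2 : ((a:ℝ)*d - b*c)^2 = 1 := by rw [hdet]; norm_num
  linear_combination (-((a:ℝ)*c + b*d) * ((a:ℝ)*(a+c) + b*(b+d)) * (((a:ℝ)+c)*c + (b+d)*d)) * hdet2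

lemma trm_nonneg {p : Q} (h : good p) : 0 ≤ trm p := by
  obtain ⟨a,b,c,d⟩ := p
  obtain ⟨h1,h2,h3,h4,h5,h6⟩ := h
  have hU : (1:ℤ) ≤ a*c + b*d := U_pos ⟨h1,h2,h3,h4,h5,h6⟩
  have hV : (1:ℤ) ≤ a*(a+c) + b*(b+d) := by nlinarith
  have hW : (1:ℤ) ≤ (a+c)*c + (b+d)*d := by nlinarith
  simp only [trm]
  have hU' : (0:ℝ) < (a:ℝ)*c + b*d := by exact_mod_cast lt_of_lt_of_le zero_lt_one hU
  have hV' : (0:ℝ) < (a:ℝ)*(a+c) + b*(b+d) := by exact_mod_cast lt_of_lt_of_le zero_lt_one hV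
  have hW' : (0:ℝ) < ((a:ℝ)+c)*c + (b+d)*d := by exact_mod_cast lt_of_lt_of_le zero_lt_one hW
  exact le_of_lt (one_div_pos.mpr (mul_pos (mul_pos hU' hV') hW'))

end Stmt14

namespace Stmt14

open Real

/-- Calibration: elementary bounds for arctan. -/
lemma arctan_le_self {x : ℝ} (hx : 0 ≤ x) : Real.arctan x ≤ x := by
  have key : ∀ y : ℝ, HasDerivAt (fun t => t - Real.arctan t) (1 - 1 / (1 + y^2)) y :=
    fun y => (hasDerivAt_id y).sub (Real.hasDerivAt_arctan y)
  have mono : Monotone (fun t => t - Real.arctan t) := by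
    apply monotone_of_deriv_nonneg
    · exact fun y => ((key y).differentiableAt)
    · intro y
      rw [(key y).deriv]
      have h1 : (0:ℝ) < 1 + y^2 := by positivity
      rw [sub_nonneg, div_le_one h1]
      nlinarith [sq_nonneg y]
  have := mono hx
  simpa using this

lemma self_sub_cube_le_arctan {x : ℝ} (hx : 0 ≤ x) : x - x^3 ≤ Real.arctan x := by
  have key : ∀ y : ℝ, HasDerivAt (fun t => Real.arctan t - t + t^3) (1 / (1 + y^2) - 1 + 3*y^2) y := by
    intro y
    have h1 := (Real.hasDerivAt_arctan y).sub (hasDerivAt_id y)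
    have h2 := h1.add (hasDerivAt_pow 3 y)
    exact h2.congr_deriv (by norm_num)
  have mono : Monotone (fun t => Real.arctan t - t + t^3) := by
    apply monotone_of_deriv_nonneg
    · exact fun y => ((key y).differentiableAt)
    · intro y
      rw [(key y).deriv]
      have h1 : (0:ℝ) < 1 + y^2 := by positivity
      have h2 : 1 - y^2 ≤ 1 / (1 + y^2) := by
        rw [le_div_iff₀ h1]; nlinarith [sq_nonneg (y^2)]
      nlinarith [sq_nonneg y]
  have := mono hx
  simp only [Real.arctan_zero] at this
  nlinarith [this]

/-- The half-angle of the node. -/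
noncomputable def ph (p : Q) : ℝ :=
  Real.arctan ((p.2.2.2 : ℝ) / (p.2.2.1 : ℝ)) - Real.arctan ((p.2.1 : ℝ) / (p.1 : ℝ))

lemma ph_split (p : Q) : ph (step false p) + ph (step true p) = ph p := by
  obtain ⟨a,b,c,d⟩ := p
  simp only [ph, step]
  push_cast
  ring

lemma ph_eq {p : Q} (h : good p) : ph p = Real.arctan (1 / (U p : ℝ)) := by
  obtain ⟨a,b,c,d⟩ := p
  obtain ⟨h1,h2,h3,h4,h5,h6⟩ := h
  simp only at h1 h2 h3 h4 h5 h6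
  have hU : (1:ℤ) ≤ a*c + b*d := by nlinarith
  have hA : (0:ℝ) < a := by exact_mod_cast lt_of_le_of_lt h1 h2
  have hB : (0:ℝ) ≤ b := by exact_mod_cast h1
  have hBA : (b:ℝ) < a := by exact_mod_cast h2
  have hC : (0:ℝ) < c := by exact_mod_cast lt_of_lt_of_le zero_lt_one h5
  have hu : (1:ℝ) ≤ (a:ℝ)*c + b*d := by exact_mod_cast hU
  have hu0 : (0:ℝ) < (a:ℝ)*c + b*d := lt_of_lt_of_le zero_lt_one hu
  have hdet : (a:ℝ)*d - b*c = 1 := by exact_mod_cast h6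
  set u : ℝ := (a:ℝ)*c + b*d with hu_def
  have hxy : ((b:ℝ)/a) * (1/u) < 1 := by
    rw [div_mul_div_comm, mul_one, div_lt_one (by positivity)]
    nlinarith
  have e2 : (1 - ((b:ℝ)/a) * (1/u)) = ((a:ℝ)*u - b)/((a:ℝ)*u) := by
    field_simp
  have hden : (0:ℝ) < (a:ℝ)*u - b := by nlinarith
  have hne : (1 - ((b:ℝ)/a) * (1/u)) ≠ 0 := by
    rw [e2]; positivity
  have key : (((b:ℝ)/a) + 1/u) / (1 - ((b:ℝ)/a) * (1/u)) = (d:ℝ)/c := by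
    rw [div_eq_div_iff hne (ne_of_gt hC), hu_def]
    field_simp
    ring_nf
    nlinarith [hdet, hA, hC]
  have harc := Real.arctan_add hxy
  rw [key] at harc
  have hUcast : ((U ((a,b,c,d) : Q)) : ℝ) = u := by simp [U, hu_def]
  show Real.arctan ((d:ℝ)/c) - Real.arctan ((b:ℝ)/a) = Real.arctan (1/(U ((a,b,c,d) : Q) : ℝ))
  rw [hUcast, ← harc]
  ring

end Stmt14

namespace Stmt14

open Real Filter Topology

noncomputable def H (l : List Bool) : ℝ := 1 / (U (node l) : ℝ)

def lvl : ℕ → Finset (List Bool)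
  | 0 => {[]}
  | n+1 => (lvl n).image (List.cons false) ∪ (lvl n).image (List.cons true)

lemma mem_lvl {l : List Bool} {n : ℕ} : l ∈ lvl n ↔ l.length = n := by
  induction n generalizing l with
  | zero => simp [lvl, List.length_eq_zero_iff]
  | succ n ih =>
    simp only [lvl, Finset.mem_union, Finset.mem_image]
    constructor
    · rintro (⟨l', hl', rfl⟩ | ⟨l', hl', rfl⟩) <;> simp [ih.mp hl']
    · intro hlen
      cases l with
      | nil => simp at hlen
      | cons x l' =>
        cases x
        · exact Or.inl ⟨l', ih.mpr (by simpa using hlen), rfl⟩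
        · exact Or.inr ⟨l', ih.mpr (by simpa using hlen), rfl⟩

lemma sum_lvl_succ (f : List Bool → ℝ) (n : ℕ) :
    ∑ l ∈ lvl (n+1), f l = ∑ l ∈ lvl n, (f (false :: l) + f (true :: l)) := by
  have hinj : ∀ (x : Bool), ∀ a ∈ lvl n, ∀ b ∈ lvl n, x :: a = x :: b → a = b := by
    intro x a _ b _ h; simpa using h
  have hdisj : Disjoint ((lvl n).image (List.cons false)) ((lvl n).image (List.cons true)) := by
    rw [Finset.disjoint_left]
    intro a ha hb
    simp only [Finset.mem_image] at ha hb
    obtain ⟨l1, _, rfl⟩ := ha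
    obtain ⟨l2, _, h⟩ := hb
    simp at h
  rw [show lvl (n+1) = (lvl n).image (List.cons false) ∪ (lvl n).image (List.cons true) from rfl,
    Finset.sum_union hdisj, Finset.sum_image (hinj false), Finset.sum_image (hinj true),
    ← Finset.sum_add_distrib]

noncomputable def S (n : ℕ) : ℝ := ∑ l ∈ lvl n, H l

lemma S_zero : S 0 = 1 := by
  simp [S, lvl, H, U, node]

lemma S_succ (n : ℕ) : S (n+1) = S n - ∑ l ∈ lvl n, trm (node l) := by
  rw [S, sum_lvl_succ, S, ← Finset.sum_sub_distrib]
  apply Finset.sum_congr rfl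
  intro l _
  have := trm_eq (good_node l)
  show H (false :: l) + H (true :: l) = H l - trm (node l)
  simp only [H, show node (false :: l) = step false (node l) from rfl,
    show node (true :: l) = step true (node l) from rfl]
  rw [this]; ring

lemma sum_trm_lvl_nonneg (n : ℕ) : 0 ≤ ∑ l ∈ lvl n, trm (node l) :=
  Finset.sum_nonneg fun l _ => trm_nonneg (good_node l)

lemma S_le_one (n : ℕ) : S n ≤ 1 := by
  induction n with
  | zero => rw [S_zero]
  | succ n ih => rw [S_succ]; linarith [sum_trm_lvl_nonneg n]

lemma PH (n : ℕ) : ∑ l ∈ lvl n, ph (node l) = π/4 := by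
  induction n with
  | zero =>
    show ∑ l ∈ {([] : List Bool)}, ph (node l) = π/4
    rw [Finset.sum_singleton]
    simp [ph, node, Real.arctan_one, Real.arctan_zero]
  | succ n ih =>
    rw [sum_lvl_succ, ← ih]
    apply Finset.sum_congr rfl
    intro l _
    exact ph_split (node l)

lemma H_nonneg (l : List Bool) : 0 ≤ H l := by
  have := U_pos (good_node l)
  have : (1:ℝ) ≤ (U (node l) : ℝ) := by exact_mod_cast this
  simp only [H]
  positivity

lemma ph_le_H (l : List Bool) : ph (node l) ≤ H l := by
  rw [ph_eq (good_node l)]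
  exact arctan_le_self (H_nonneg l)

lemma S_ge (n : ℕ) : π/4 ≤ S n := by
  rw [← PH n]
  exact Finset.sum_le_sum fun l _ => ph_le_H l

lemma S_sub_le (n : ℕ) : S n - π/4 ≤ (1/(n+1) : ℝ)^2 := by
  have key : ∀ l ∈ lvl n, H l - ph (node l) ≤ (1/(n+1) : ℝ)^2 * H l := by
    intro l hl
    have hlen : l.length = n := mem_lvl.mp hl
    have hU1 : ((n:ℝ) + 1) ≤ (U (node l) : ℝ) := by
      have := U_depth l
      rw [hlen] at this
      exact_mod_cast this
    have hU0 : (0:ℝ) < (U (node l) : ℝ) := lt_of_lt_of_le (by positivity) hU1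
    have hx : H l ≤ 1/((n:ℝ)+1) := by
      rw [H, div_le_div_iff₀ hU0 (by positivity)]
      linarith
    have hx0 : 0 ≤ H l := H_nonneg l
    rw [ph_eq (good_node l)]
    have hcube := self_sub_cube_le_arctan (x := H l) hx0
    have : H l - Real.arctan (H l) ≤ (H l)^2 * H l := by nlinarith [hcube]
    rw [show (1 / (U (node l) : ℝ)) = H l from rfl]
    have hsq : (H l)^2 ≤ (1/((n:ℝ)+1))^2 := by nlinarith
    nlinarith
  have h2 : S n - π/4 = ∑ l ∈ lvl n, (H l - ph (node l)) := by
    rw [Finset.sum_sub_distrib, PH, S]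
  rw [h2]
  calc ∑ l ∈ lvl n, (H l - ph (node l)) ≤ ∑ l ∈ lvl n, (1/(n+1) : ℝ)^2 * H l :=
        Finset.sum_le_sum key
    _ = (1/(n+1) : ℝ)^2 * S n := by rw [S, Finset.mul_sum]
    _ ≤ (1/(n+1) : ℝ)^2 * 1 := by
        have := S_le_one n
        have h0 : (0:ℝ) ≤ (1/(n+1) : ℝ)^2 := by positivity
        nlinarith
    _ = (1/(n+1) : ℝ)^2 := by ring

lemma S_tendsto : Tendsto S atTop (𝓝 (π/4)) := by
  have hup : Tendsto (fun n : ℕ => π/4 + (1/(n+1) : ℝ)^2) atTop (𝓝 (π/4)) := by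
    have h1 : Tendsto (fun n : ℕ => (1/(n+1) : ℝ)) atTop (𝓝 0) :=
      tendsto_one_div_add_atTop_nhds_zero_nat
    have h2 := (h1.pow 2)
    simpa using tendsto_const_nhds.add h2
  refine tendsto_of_tendsto_of_tendsto_of_le_of_le tendsto_const_nhds hup
    (fun n => S_ge n) (fun n => by linarith [S_sub_le n])

def below : ℕ → Finset (List Bool)
  | 0 => lvl 0
  | n+1 => below n ∪ lvl (n+1)

lemma mem_below {l : List Bool} {n : ℕ} : l ∈ below n ↔ l.length ≤ n := by
  induction n with
  | zero => simp [below, mem_lvl]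
  | succ n ih =>
    simp [below, Finset.mem_union, ih, mem_lvl]
    omega

lemma sum_below (n : ℕ) : ∑ l ∈ below n, trm (node l) = 1 - S (n+1) := by
  induction n with
  | zero =>
    show ∑ l ∈ lvl 0, trm (node l) = 1 - S 1
    have := S_succ 0
    rw [S_zero] at this
    linarith
  | succ n ih =>
    have hdisj : Disjoint (below n) (lvl (n+1)) := by
      rw [Finset.disjoint_left]
      intro a ha hb
      rw [mem_below] at ha
      rw [mem_lvl] at hb
      omega
    show ∑ l ∈ below n ∪ lvl (n+1), trm (node l) = 1 - S (n+2)
    rw [Finset.sum_union hdisj, ih]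
    have := S_succ (n+1)
    linarith

lemma summable_trm : Summable (fun l => trm (node l)) := by
  apply summable_of_sum_le (c := 1)
  · intro l; exact trm_nonneg (good_node l)
  · intro s
    have hsub : s ⊆ below (s.sup List.length) := by
      intro l hl
      rw [mem_below]
      exact Finset.le_sup hl
    calc ∑ l ∈ s, trm (node l) ≤ ∑ l ∈ below (s.sup List.length), trm (node l) :=
          Finset.sum_le_sum_of_subset_of_nonneg hsub (fun l _ _ => trm_nonneg (good_node l))
      _ = 1 - S (s.sup List.length + 1) := sum_below _
      _ ≤ 1 := by linarith [S_ge (s.sup List.length + 1), Real.pi_pos]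

lemma hasSum_trm : HasSum (fun l => trm (node l)) (1 - π/4) := by
  have hmono : Monotone below := monotone_nat_of_le_succ (fun n => by
    show below n ⊆ below n ∪ lvl (n+1)
    exact Finset.subset_union_left)
  have hexh : ∀ l : List Bool, ∃ n, l ∈ below n := fun l => ⟨l.length, mem_below.mpr le_rfl⟩
  have hbelow : Tendsto below atTop atTop := hmono.tendsto_atTop_finset hexh
  have hsum := summable_trm.hasSum
  have h1 : Tendsto (fun n => ∑ l ∈ below n, trm (node l)) atTop (𝓝 (∑' l, trm (node l))) :=
    hsum.comp hbelow
  have h2 : Tendsto (fun n => ∑ l ∈ below n, trm (node l)) atTop (𝓝 (1 - π/4)) := by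
    simp only [sum_below]
    exact tendsto_const_nhds.sub (S_tendsto.comp (tendsto_add_atTop_nat 1))
  have : ∑' l, trm (node l) = 1 - π/4 := tendsto_nhds_unique h1 h2
  rwa [this] at hsum

end Stmt14

theorem stmt_14 :
    HasSum
      (fun p : T =>
        1 / (((p.val.1 : ℝ) * (p.val.2.2.1 : ℝ) + (p.val.2.1 : ℝ) * (p.val.2.2.2 : ℝ)) *
          ((p.val.1 : ℝ) * ((p.val.1 : ℝ) + (p.val.2.2.1 : ℝ)) +
            (p.val.2.1 : ℝ) * ((p.val.2.1 : ℝ) + (p.val.2.2.2 : ℝ))) *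
          (((p.val.1 : ℝ) + (p.val.2.2.1 : ℝ)) * (p.val.2.2.1 : ℝ) +
            ((p.val.2.1 : ℝ) + (p.val.2.2.2 : ℝ)) * (p.val.2.2.2 : ℝ))))
      (1 - Real.pi / 4) := by
  rw [← Equiv.hasSum_iff (Equiv.ofBijective Stmt14.toT Stmt14.toT_bij)]
  exact Stmt14.hasSum_trm
end

section
/- For every real μ > 0, the series whose terms are μ³/( (a·c + μ²·b·d)·( a·(a+c) + μ²·b·(b+d) )·( (a+c)·c + μ²·(b+d)·d ) ), summed over all quadruples (a,b,c,d) of nonnegative integers with a ≥ b, c ≥ d and a·d − b·c = 1, converges and its sum equals μ − arctan(μ). -/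
namespace Stmt15

open Real Finset

abbrev S := ℤ × ℤ × ℤ × ℤ

def stepL (p : S) : S := (p.1, p.2.1, p.1 + p.2.2.1, p.2.1 + p.2.2.2)
def stepR (p : S) : S := (p.1 + p.2.2.1, p.2.1 + p.2.2.2, p.2.2.1, p.2.2.2)
def step : Bool → S → S
  | false, p => stepL p
  | true, p => stepR p

def root : S := (1, 0, 1, 1)

def node (w : List Bool) : S := w.foldl (fun p b => step b p) root

lemma node_nil : node [] = root := rfl

lemma node_append (w : List Bool) (b : Bool) : node (w ++ [b]) = step b (node w) := by
  simp [node, List.foldl_append]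

def Good (p : S) : Prop :=
  1 ≤ p.1 ∧ p.2.1 ≤ p.1 ∧ 0 ≤ p.2.1 ∧ 1 ≤ p.2.2.1 ∧ p.2.2.2 ≤ p.2.2.1 ∧ 0 ≤ p.2.2.2 ∧
    p.1 * p.2.2.2 - p.2.1 * p.2.2.1 = 1

lemma good_root : Good root := by
  refine ⟨le_refl _, ?_, ?_, ?_, ?_, ?_, ?_⟩ <;> simp [root]

lemma good_step (b : Bool) {p : S} (h : Good p) : Good (step b p) := by
  obtain ⟨a, x, c, d⟩ := p
  obtain ⟨h1, h2, h3, h4, h5, h6, h7⟩ := h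
  dsimp only at h1 h2 h3 h4 h5 h6 h7
  cases b <;>
    exact ⟨by simp [step, stepL, stepR]; omega, by simp [step, stepL, stepR]; omega,
      by simp [step, stepL, stepR]; omega, by simp [step, stepL, stepR]; omega,
      by simp [step, stepL, stepR]; omega, by simp [step, stepL, stepR]; omega,
      by simp only [step, stepL, stepR]; linear_combination h7⟩

lemma good_node (w : List Bool) : Good (node w) := by
  induction w using List.reverseRecOn with
  | nil => exact good_root
  | append_singleton w b ih => rw [node_append]; exact good_step b ih

lemma good_mem_T {p : S} (h : Good p) : p ∈ T :=
  ⟨h.2.1, h.2.2.1, h.2.2.2.2.1, h.2.2.2.2.2.1, h.2.2.2.2.2.2⟩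

lemma mem_T_good {p : S} (h : p ∈ T) : Good p := by
  obtain ⟨a, x, c, d⟩ := p
  obtain ⟨h1, h2, h3, h4, h5⟩ := h
  simp only [Good] at *
  have ha : 1 ≤ a := by nlinarith
  have hc : 1 ≤ c := by nlinarith
  exact ⟨ha, h1, h2, hc, h3, h4, h5⟩

lemma node_prod_ge (w : List Bool) :
    (w.length : ℤ) + 1 ≤ (node w).1 * (node w).2.2.1 := by
  induction w using List.reverseRecOn with
  | nil => simp [node_nil, root]
  | append_singleton w b ih =>
    have hg := good_node w
    rw [node_append]
    revert hg ih
    generalize node w = q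
    intro ih hg
    obtain ⟨a, x, c, d⟩ := q
    have h1 := hg.1; have h2 := hg.2.1; have h3 := hg.2.2.1; have h4 := hg.2.2.2.1
    have h5 := hg.2.2.2.2.1; have h6 := hg.2.2.2.2.2.1; have h7 := hg.2.2.2.2.2.2
    clear hg
    dsimp only at h1 h2 h3 h4 h5 h6 h7 ih
    cases b <;>
      simp only [step, stepL, stepR, List.length_append, List.length_singleton] <;>
      push_cast <;> nlinarith [ih, mul_pos (show (0:ℤ) < a by omega) (show (0:ℤ) < c by omega)]

/-! ### Surjectivity -/

lemma exists_node_aux : ∀ n : ℕ, ∀ p : S, p ∈ T → p.1 + p.2.2.1 ≤ n → ∃ w, node w = p := by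
  intro n
  induction n with
  | zero =>
    intro p hp hle
    obtain ⟨h1, h2, h3, h4, h5, h6, h7⟩ := mem_T_good hp
    omega
  | succ n ih =>
    intro p hp hle
    obtain ⟨a, x, c, d⟩ := p
    obtain ⟨h1, h2, h3, h4, h5, h6, h7⟩ := mem_T_good hp
    simp only at *
    rcases lt_trichotomy a c with hac | hac | hac
    · -- left child of (a, x, c - a, d - x)
      have hdx : x ≤ d := by nlinarith
      have hca : d - x ≤ c - a := by nlinarith
      have hq : ((a, x, c - a, d - x) : S) ∈ T := by
        simp only [T, Set.mem_setOf_eq]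
        refine ⟨h2, h3, by omega, by omega, by linear_combination h7⟩
      obtain ⟨w, hw⟩ := ih (a, x, c - a, d - x) hq
        (by show a + (c - a) ≤ (n : ℤ); omega)
      refine ⟨w ++ [false], ?_⟩
      rw [node_append, hw]
      show ((a, x, a + (c - a), x + (d - x)) : S) = (a, x, c, d)
      simp only [Prod.mk.injEq, true_and, and_true]
      omega
    · -- a = c : the root
      subst hac
      have hmul : a * (d - x) = 1 := by linear_combination h7
      have ha1 : a = 1 := Int.eq_one_of_mul_eq_one_right (by omega) hmul
      have hdx1 : d - x = 1 := by rw [ha1, one_mul] at hmul; omega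
      refine ⟨[], ?_⟩
      rw [node_nil]
      simp only [root, Prod.mk.injEq]
      omega
    · -- right child of (a - c, x - d, c, d)
      have hdx : d ≤ x := by nlinarith
      have hca : x - d ≤ a - c := by nlinarith
      have hq : ((a - c, x - d, c, d) : S) ∈ T := by
        simp only [T, Set.mem_setOf_eq]
        refine ⟨by omega, by omega, h5, h6, by linear_combination h7⟩
      obtain ⟨w, hw⟩ := ih (a - c, x - d, c, d) hq
        (by show (a - c) + c ≤ (n : ℤ); omega)
      refine ⟨w ++ [true], ?_⟩
      rw [node_append, hw]
      show (((a - c) + c, (x - d) + d, c, d) : S) = (a, x, c, d)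
      simp only [Prod.mk.injEq, true_and, and_true]
      omega

lemma exists_node {p : S} (hp : p ∈ T) : ∃ w, node w = p := by
  have hg := mem_T_good hp
  exact exists_node_aux (p.1 + p.2.2.1).toNat p hp (by omega)

/-! ### Injectivity -/

lemma node_cmp_aux (w : List Bool) (b : Bool) :
    (b = true → (node (w ++ [b])).2.2.1 < (node (w ++ [b])).1) ∧
    (b = false → (node (w ++ [b])).1 < (node (w ++ [b])).2.2.1) := by
  have hg := good_node w
  rw [node_append]
  revert hg
  generalize node w = q
  intro hg
  obtain ⟨a, x, c, d⟩ := q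
  have h1 := hg.1; have h4 := hg.2.2.2.1
  dsimp only at h1 h4
  cases b
  · refine ⟨fun h => by simp at h, fun _ => ?_⟩
    show a < a + c
    omega
  · refine ⟨fun _ => ?_, fun h => by simp at h⟩
    show c < a + c
    omega

lemma step_inj (b : Bool) {p q : S} (h : step b p = step b q) : p = q := by
  obtain ⟨a, x, c, d⟩ := p
  obtain ⟨a', x', c', d'⟩ := q
  cases b <;> simp only [step, stepL, stepR, Prod.mk.injEq] at h ⊢ <;> omega

lemma node_ne_root (v : List Bool) (b : Bool) : node (v ++ [b]) ≠ root := by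
  intro h
  have h1 := (node_cmp_aux v b).1
  have h2 := (node_cmp_aux v b).2
  cases b
  · have := h2 rfl; rw [h] at this; simp [root] at this
  · have := h1 rfl; rw [h] at this; simp [root] at this

lemma node_inj : ∀ w w' : List Bool, node w = node w' → w = w' := by
  intro w
  induction w using List.reverseRecOn with
  | nil =>
    intro w'
    induction w' using List.reverseRecOn with
    | nil => intro _; rfl
    | append_singleton v b _ =>
      intro h
      exact absurd (node_nil ▸ h.symm) (node_ne_root v b)
  | append_singleton u b ih =>
    intro w'
    induction w' using List.reverseRecOn with
    | nil =>
      intro h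
      exact absurd (node_nil ▸ h) (node_ne_root u b)
    | append_singleton v b' _ =>
      intro h
      have hb : b = b' := by
        by_contra hbb
        cases b <;> cases b' <;> simp_all
        · have h1 := (node_cmp_aux u false).2 rfl
          have h2 := (node_cmp_aux v true).1 rfl
          rw [h] at h1; omega
        · have h1 := (node_cmp_aux u true).1 rfl
          have h2 := (node_cmp_aux v false).2 rfl
          rw [h] at h1; omega
      subst hb
      rw [node_append, node_append] at h
      have := ih v (step_inj b h)
      rw [this]

noncomputable def eqv : List Bool ≃ T :=
  Equiv.ofBijective (fun w => ⟨node w, good_mem_T (good_node w)⟩)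
    ⟨fun w w' h => node_inj w w' (congrArg Subtype.val h),
     fun p => by obtain ⟨w, hw⟩ := exists_node p.2; exact ⟨w, Subtype.ext hw⟩⟩

/-! ### Analytic lemmas -/

lemma arctan_le_self {t : ℝ} (ht : 0 ≤ t) : Real.arctan t ≤ t := by
  have hmono : Monotone (fun x : ℝ => x - Real.arctan x) := by
    apply monotone_of_hasDerivAt_nonneg (f' := fun x => 1 - 1 / (1 + x ^ 2))
    · intro x
      exact (hasDerivAt_id x).sub (Real.hasDerivAt_arctan x)
    · intro x
      have h1 : (0:ℝ) < 1 + x ^ 2 := by positivity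
      have : 1 / (1 + x ^ 2) ≤ 1 := by
        rw [div_le_one h1]; nlinarith
      simp only [Pi.zero_apply]
      linarith
  have := hmono ht
  simpa [Real.arctan_zero] using this

lemma sub_arctan_le {t : ℝ} (ht : 0 ≤ t) :
    t - Real.arctan t ≤ t ^ 2 * Real.arctan t := by
  have hmono : Monotone (fun x : ℝ => x ^ 2 * Real.arctan x + Real.arctan x - x) := by
    apply monotone_of_hasDerivAt_nonneg
      (f' := fun x => ((2:ℕ) * x ^ 1 * Real.arctan x + x ^ 2 * (1 / (1 + x ^ 2))
        + 1 / (1 + x ^ 2)) - 1)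
    · intro x
      exact (((hasDerivAt_pow 2 x).mul (Real.hasDerivAt_arctan x)).add
        (Real.hasDerivAt_arctan x)).sub (hasDerivAt_id x)
    · intro x
      have h1 : (0:ℝ) < 1 + x ^ 2 := by positivity
      have h2 : x ^ 2 * (1 / (1 + x ^ 2)) + 1 / (1 + x ^ 2) = 1 := by
        field_simp
        ring
      have h3 : 0 ≤ x * Real.arctan x := by
        rcases le_or_gt 0 x with hx | hx
        · exact mul_nonneg hx (by simpa using Real.arctan_strictMono.monotone hx)
        · have h4 : Real.arctan x ≤ 0 := by
            simpa using Real.arctan_strictMono.monotone hx.le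
          nlinarith
      simp only [Pi.zero_apply, pow_one, Nat.cast_ofNat]
      nlinarith
  have := hmono ht
  simp only [Real.arctan_zero, mul_zero, zero_add, zero_sub, zero_pow, sub_zero,
    ne_eq, OfNat.ofNat_ne_zero, not_false_eq_true, zero_mul] at this
  linarith

/-! ### The quantities P, X, G and the local identities -/

noncomputable def Pr (μ : ℝ) (p : S) : ℝ :=
  (p.1 : ℝ) * (p.2.2.1 : ℝ) + μ ^ 2 * (p.2.1 : ℝ) * (p.2.2.2 : ℝ)

noncomputable def X (μ : ℝ) (p : S) : ℝ := μ / Pr μ p - Real.arctan (μ / Pr μ p)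

noncomputable def G (μ : ℝ) (p : S) : ℝ := Real.arctan (μ / Pr μ p)

noncomputable def term (μ : ℝ) (p : S) : ℝ :=
  μ ^ 3 / (Pr μ p * Pr μ (stepL p) * Pr μ (stepR p))

section WithMu

variable {μ : ℝ}

lemma Pr_ge {p : S} (h : Good p) : ((p.1 * p.2.2.1 : ℤ) : ℝ) ≤ Pr μ p := by
  obtain ⟨a, x, c, d⟩ := p
  have h3 := h.2.2.1; have h6 := h.2.2.2.2.2.1
  dsimp only at h3 h6
  have hx : (0:ℝ) ≤ (x:ℝ) := by exact_mod_cast h3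
  have hd : (0:ℝ) ≤ (d:ℝ) := by exact_mod_cast h6
  simp only [Pr]
  push_cast
  nlinarith [mul_nonneg (mul_nonneg (sq_nonneg μ) hx) hd]

lemma Pr_pos {p : S} (h : Good p) : 0 < Pr μ p := by
  have h2 := Pr_ge (μ := μ) h
  have h0 : (1:ℤ) ≤ p.1 * p.2.2.1 :=
    mul_pos (lt_of_lt_of_le zero_lt_one h.1) (lt_of_lt_of_le zero_lt_one h.2.2.2.1)
  have : (1:ℝ) ≤ ((p.1 * p.2.2.1 : ℤ) : ℝ) := by exact_mod_cast h0
  linarith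

lemma key_identity {p : S} (h : Good p) :
    Pr μ (stepL p) * Pr μ (stepR p) - Pr μ p * Pr μ (stepL p) - Pr μ p * Pr μ (stepR p)
      = μ ^ 2 := by
  obtain ⟨a, x, c, d⟩ := p
  have h7 : ((a : ℝ) * d - x * c) = 1 := by exact_mod_cast congrArg (Int.cast : ℤ → ℝ) h.2.2.2.2.2.2
  simp only [Pr, stepL, stepR]
  push_cast
  linear_combination (μ ^ 2 * ((a:ℝ) * d - x * c + 1)) * h7

lemma term_eq {p : S} (h : Good p) :
    term μ p = μ / Pr μ p - μ / Pr μ (stepL p) - μ / Pr μ (stepR p) := by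
  have hP := Pr_pos (μ := μ) h
  have hQ : 0 < Pr μ (stepL p) := Pr_pos (good_step false h)
  have hR : 0 < Pr μ (stepR p) := Pr_pos (good_step true h)
  have hk := key_identity (μ := μ) h
  have e1 : μ / Pr μ p - μ / Pr μ (stepL p) - μ / Pr μ (stepR p)
      = μ * (Pr μ (stepL p) * Pr μ (stepR p) - Pr μ p * Pr μ (stepL p)
          - Pr μ p * Pr μ (stepR p)) / (Pr μ p * Pr μ (stepL p) * Pr μ (stepR p)) := by
    field_simp
    ring
  rw [term, e1, hk]
  ring_nf

lemma arctan_split {p : S} (h : Good p) :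
    Real.arctan (μ / Pr μ p)
      = Real.arctan (μ / Pr μ (stepL p)) + Real.arctan (μ / Pr μ (stepR p)) := by
  have hP := Pr_pos (μ := μ) h
  have hQ : 0 < Pr μ (stepL p) := Pr_pos (good_step false h)
  have hR : 0 < Pr μ (stepR p) := Pr_pos (good_step true h)
  have hk := key_identity (μ := μ) h
  have hQR : μ ^ 2 < Pr μ (stepL p) * Pr μ (stepR p) := by nlinarith
  have hxy : (μ / Pr μ (stepL p)) * (μ / Pr μ (stepR p)) < 1 := by
    rw [div_mul_div_comm, div_lt_one (by positivity)]
    nlinarith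
  have h1 : 0 < 1 - μ / Pr μ (stepL p) * (μ / Pr μ (stepR p)) := by linarith
  rw [Real.arctan_add hxy]
  congr 1
  rw [eq_div_iff h1.ne']
  field_simp
  linear_combination μ * hk

lemma X_split {p : S} (h : Good p) :
    X μ p = X μ (stepL p) + X μ (stepR p) + term μ p := by
  rw [X, X, X, term_eq h, arctan_split h]
  ring

lemma X_nonneg (hμ : 0 < μ) {p : S} (h : Good p) : 0 ≤ X μ p := by
  have hP := Pr_pos (μ := μ) h
  have ht : 0 ≤ μ / Pr μ p := div_nonneg hμ.le hP.le
  have := arctan_le_self ht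
  rw [X]; linarith

lemma term_nonneg (hμ : 0 < μ) {p : S} (h : Good p) : 0 ≤ term μ p := by
  have hP := Pr_pos (μ := μ) h
  have hQ : 0 < Pr μ (stepL p) := Pr_pos (good_step false h)
  have hR : 0 < Pr μ (stepR p) := Pr_pos (good_step true h)
  rw [term]
  positivity

lemma G_nonneg (hμ : 0 < μ) {p : S} (h : Good p) : 0 ≤ G μ p := by
  have hP := Pr_pos (μ := μ) h
  have ht : 0 ≤ μ / Pr μ p := div_nonneg hμ.le hP.le
  rw [G]
  simpa using Real.arctan_strictMono.monotone ht

end WithMu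

/-! ### Finite levels of the tree -/

def L : ℕ → Finset (List Bool)
  | 0 => {[]}
  | n + 1 => (L n).biUnion (fun w => {w ++ [false], w ++ [true]})

lemma concat_inj {w v : List Bool} {b b' : Bool} (h : w ++ [b] = v ++ [b']) :
    w = v ∧ b = b' := by
  have h1 : w = v := by
    have := congrArg List.dropLast h
    simpa [List.dropLast_concat] using this
  subst h1
  simp at h
  exact ⟨rfl, h⟩

lemma mem_L {n : ℕ} {w : List Bool} : w ∈ L n ↔ w.length = n := by
  induction n generalizing w with
  | zero => simp [L, List.length_eq_zero_iff]
  | succ n ih =>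
    simp only [L, Finset.mem_biUnion, Finset.mem_insert, Finset.mem_singleton]
    constructor
    · rintro ⟨v, hv, rfl | rfl⟩ <;> simp [ih.mp hv]
    · intro hw
      induction w using List.reverseRecOn with
      | nil => simp at hw
      | append_singleton v b _ =>
        refine ⟨v, ih.mpr ?_, ?_⟩
        · simpa using hw
        · cases b <;> simp

lemma sum_L_succ (n : ℕ) (H : List Bool → ℝ) :
    ∑ w ∈ L (n + 1), H w = ∑ w ∈ L n, (H (w ++ [false]) + H (w ++ [true])) := by
  rw [show L (n+1) = (L n).biUnion (fun w => {w ++ [false], w ++ [true]}) from rfl,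
    Finset.sum_biUnion]
  · apply Finset.sum_congr rfl
    intro w _
    rw [Finset.sum_pair (by simp)]
  · intro u _ v _ huv
    simp only [Finset.disjoint_left, Finset.mem_insert, Finset.mem_singleton]
    rintro w (rfl | rfl) (h | h) <;> exact huv (concat_inj h).1


/-! ### Summation over the tree -/

open Filter

noncomputable def F (μ : ℝ) (w : List Bool) : ℝ := X μ (node w)
noncomputable def Gf (μ : ℝ) (w : List Bool) : ℝ := G μ (node w)
noncomputable def f (μ : ℝ) (w : List Bool) : ℝ := term μ (node w)

section Sums

variable {μ : ℝ}

lemma Pr_root : Pr μ root = 1 := by simp [Pr, root]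

lemma F_nil : F μ [] = μ - Real.arctan μ := by
  rw [F, node_nil, X, Pr_root, div_one]

lemma Gf_nil : Gf μ [] = Real.arctan μ := by
  rw [Gf, node_nil, G, Pr_root, div_one]

lemma F_split (w : List Bool) :
    F μ w = F μ (w ++ [false]) + F μ (w ++ [true]) + f μ w := by
  rw [F, F, F, f, node_append, node_append]
  exact X_split (good_node w)

lemma Gf_split (w : List Bool) :
    Gf μ w = Gf μ (w ++ [false]) + Gf μ (w ++ [true]) := by
  rw [Gf, Gf, Gf, G, G, G, node_append, node_append]
  exact arctan_split (good_node w)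

lemma F_nonneg (hμ : 0 < μ) (w : List Bool) : 0 ≤ F μ w := X_nonneg hμ (good_node w)

lemma f_nonneg (hμ : 0 < μ) (w : List Bool) : 0 ≤ f μ w := term_nonneg hμ (good_node w)

lemma sum_Gf (n : ℕ) : ∑ w ∈ L n, Gf μ w = Real.arctan μ := by
  induction n with
  | zero => simp [L, Gf_nil]
  | succ n ih =>
    rw [sum_L_succ n (Gf μ), ← ih]
    exact Finset.sum_congr rfl fun w _ => (Gf_split w).symm

lemma sum_f_eq (n : ℕ) :
    ∑ w ∈ L n, f μ w = ∑ w ∈ L n, F μ w - ∑ w ∈ L (n + 1), F μ w := by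
  rw [sum_L_succ n (F μ), ← Finset.sum_sub_distrib]
  exact Finset.sum_congr rfl fun w _ => by rw [F_split w]; ring

def B (n : ℕ) : Finset (List Bool) := (Finset.range n).biUnion L

lemma sum_f_B (n : ℕ) : ∑ w ∈ B n, f μ w = F μ [] - ∑ w ∈ L n, F μ w := by
  induction n with
  | zero => simp [B, L]
  | succ n ih =>
    have hB : B (n + 1) = L n ∪ B n := by
      rw [B, Finset.range_add_one, Finset.biUnion_insert]
      rfl
    have hdisj : Disjoint (L n) (B n) := by
      rw [Finset.disjoint_left]
      intro w hw hw2
      rw [B, Finset.mem_biUnion] at hw2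
      obtain ⟨k, hk, hwk⟩ := hw2
      rw [mem_L] at hw hwk
      rw [Finset.mem_range] at hk
      omega
    rw [hB, Finset.sum_union hdisj, ih, sum_f_eq]
    ring

lemma Pr_node_ge (w : List Bool) : (w.length : ℝ) + 1 ≤ Pr μ (node w) := by
  have h := Pr_ge (μ := μ) (good_node w)
  have h2 := node_prod_ge w
  have h3 : ((w.length : ℤ) + 1 : ℝ) ≤ (((node w).1 * (node w).2.2.1 : ℤ) : ℝ) := by
    exact_mod_cast h2
  push_cast at h h3
  linarith

lemma F_le (hμ : 0 < μ) (n : ℕ) (w : List Bool) (hw : w ∈ L n) :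
    F μ w ≤ (μ / (n + 1)) ^ 2 * Gf μ w := by
  have hP := Pr_pos (μ := μ) (good_node w)
  set t := μ / Pr μ (node w) with htdef
  have ht0 : 0 ≤ t := div_nonneg hμ.le hP.le
  have hlen : (n : ℝ) + 1 ≤ Pr μ (node w) := by
    have := Pr_node_ge (μ := μ) w
    rw [mem_L.mp hw] at this
    exact this
  have ht : t ≤ μ / (n + 1) := by
    rw [htdef]
    gcongr
  have harc : 0 ≤ Real.arctan t := by
    simpa using Real.arctan_strictMono.monotone ht0
  have h1 : t - Real.arctan t ≤ t ^ 2 * Real.arctan t := sub_arctan_le ht0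
  have h2 : t ^ 2 ≤ (μ / (n + 1)) ^ 2 := pow_le_pow_left₀ ht0 ht 2
  have h3 : t ^ 2 * Real.arctan t ≤ (μ / (n + 1)) ^ 2 * Real.arctan t :=
    mul_le_mul_of_nonneg_right h2 harc
  have hF : F μ w = t - Real.arctan t := rfl
  have hG : Gf μ w = Real.arctan t := rfl
  rw [hF, hG]
  linarith

lemma sum_F_le (hμ : 0 < μ) (n : ℕ) :
    ∑ w ∈ L n, F μ w ≤ (μ / (n + 1)) ^ 2 * Real.arctan μ := by
  calc ∑ w ∈ L n, F μ w ≤ ∑ w ∈ L n, (μ / (n + 1)) ^ 2 * Gf μ w :=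
        Finset.sum_le_sum fun w hw => F_le hμ n w hw
    _ = (μ / (n + 1)) ^ 2 * ∑ w ∈ L n, Gf μ w := by rw [Finset.mul_sum]
    _ = (μ / (n + 1)) ^ 2 * Real.arctan μ := by rw [sum_Gf]

lemma tendsto_sum_F (hμ : 0 < μ) :
    Tendsto (fun n : ℕ => ∑ w ∈ L n, F μ w) atTop (nhds 0) := by
  apply squeeze_zero (fun n => Finset.sum_nonneg fun w _ => F_nonneg hμ w) (sum_F_le hμ)
  have h1 : Tendsto (fun n : ℕ => μ / (n + 1)) atTop (nhds 0) := by
    have h0 := (tendsto_const_div_atTop_nhds_zero_nat μ).comp (tendsto_add_atTop_nat 1)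
    exact h0.congr fun n => by push_cast [Function.comp]; ring
  have h2 := (h1.pow 2).mul_const (Real.arctan μ)
  simpa using h2

lemma hasSum_f (hμ : 0 < μ) : HasSum (f μ) (μ - Real.arctan μ) := by
  apply hasSum_of_isLUB_of_nonneg _ (f_nonneg hμ)
  constructor
  · rintro r ⟨s, rfl⟩
    set n := s.sup List.length + 1 with hn
    have hsub : s ⊆ B n := by
      intro w hw
      rw [B, Finset.mem_biUnion]
      refine ⟨w.length, Finset.mem_range.mpr ?_, mem_L.mpr rfl⟩
      have := Finset.le_sup (f := List.length) hw
      omega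
    have hle : ∑ w ∈ s, f μ w ≤ ∑ w ∈ B n, f μ w :=
      Finset.sum_le_sum_of_subset_of_nonneg hsub fun w _ _ => f_nonneg hμ w
    have hSn : 0 ≤ ∑ w ∈ L n, F μ w := Finset.sum_nonneg fun w _ => F_nonneg hμ w
    have := sum_f_B (μ := μ) n
    rw [F_nil] at this
    simp only [Set.mem_setOf_eq]
    linarith [hle, this.le]
  · intro u hu
    have h1 : ∀ n : ℕ, (μ - Real.arctan μ) - ∑ w ∈ L n, F μ w ≤ u := by
      intro n
      have hmem : ∑ w ∈ B n, f μ w ∈ Set.range fun s : Finset (List Bool) => ∑ w ∈ s, f μ w :=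
        ⟨B n, rfl⟩
      have := hu hmem
      rw [sum_f_B, F_nil] at this
      exact this
    have h2 : Tendsto (fun n : ℕ => (μ - Real.arctan μ) - ∑ w ∈ L n, F μ w) atTop
        (nhds (μ - Real.arctan μ)) := by
      simpa using tendsto_const_nhds.sub (tendsto_sum_F hμ)
    exact le_of_tendsto h2 (Filter.Eventually.of_forall h1)

end Sums

end Stmt15

theorem stmt_15 (μ : ℝ) (hμ : 0 < μ) :
    HasSum
      (fun p : T =>
        μ ^ 3 / (((p.val.1 : ℝ) * (p.val.2.2.1 : ℝ) +
            μ ^ 2 * (p.val.2.1 : ℝ) * (p.val.2.2.2 : ℝ)) *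
          ((p.val.1 : ℝ) * ((p.val.1 : ℝ) + (p.val.2.2.1 : ℝ)) +
            μ ^ 2 * (p.val.2.1 : ℝ) * ((p.val.2.1 : ℝ) + (p.val.2.2.2 : ℝ))) *
          (((p.val.1 : ℝ) + (p.val.2.2.1 : ℝ)) * (p.val.2.2.1 : ℝ) +
            μ ^ 2 * ((p.val.2.1 : ℝ) + (p.val.2.2.2 : ℝ)) * (p.val.2.2.2 : ℝ))))
      (μ - Real.arctan μ) := by
  rw [← Equiv.hasSum_iff Stmt15.eqv]
  have heq : ((fun p : T =>
        μ ^ 3 / (((p.val.1 : ℝ) * (p.val.2.2.1 : ℝ) +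
            μ ^ 2 * (p.val.2.1 : ℝ) * (p.val.2.2.2 : ℝ)) *
          ((p.val.1 : ℝ) * ((p.val.1 : ℝ) + (p.val.2.2.1 : ℝ)) +
            μ ^ 2 * (p.val.2.1 : ℝ) * ((p.val.2.1 : ℝ) + (p.val.2.2.2 : ℝ))) *
          (((p.val.1 : ℝ) + (p.val.2.2.1 : ℝ)) * (p.val.2.2.1 : ℝ) +
            μ ^ 2 * ((p.val.2.1 : ℝ) + (p.val.2.2.2 : ℝ)) * (p.val.2.2.2 : ℝ)))) ∘
        Stmt15.eqv) = Stmt15.f μ := by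
    funext w
    show μ ^ 3 / _ = Stmt15.term μ (Stmt15.node w)
    simp only [show ((Stmt15.eqv w) : ℤ × ℤ × ℤ × ℤ) = Stmt15.node w from rfl]
    simp only [Stmt15.term, Stmt15.Pr, Stmt15.stepL, Stmt15.stepR]
    push_cast
    ring
  rw [heq]
  exact Stmt15.hasSum_f hμ
end

section
/- The series whose terms are (1/( a²·c²·(a+c)² ))·( b·d/(a·c) + b·(b+d)/( a·(a+c) ) + (b+d)·d/( (a+c)·c ) ), summed over all quadruples (a,b,c,d) of nonnegative integers with a ≥ b, c ≥ d and a·d − b·c = 1, converges and its sum equals 1/5. -/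
namespace SB16

abbrev Z4 := ℤ × ℤ × ℤ × ℤ

def Good (p : Z4) : Prop :=
  1 ≤ p.1 ∧ 0 ≤ p.2.1 ∧ p.2.1 ≤ p.1 ∧ 1 ≤ p.2.2.1 ∧ 1 ≤ p.2.2.2 ∧
    p.2.2.2 ≤ p.2.2.1 ∧ p.1 * p.2.2.2 - p.2.1 * p.2.2.1 = 1

def stepL (p : Z4) : Z4 := (p.1, p.2.1, p.1 + p.2.2.1, p.2.1 + p.2.2.2)
def stepR (p : Z4) : Z4 := (p.1 + p.2.2.1, p.2.1 + p.2.2.2, p.2.2.1, p.2.2.2)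

def v : List Bool → Z4
  | [] => (1, 0, 1, 1)
  | false :: w => stepL (v w)
  | true :: w => stepR (v w)

lemma good_mk {a b c d : ℤ} :
    Good (a, b, c, d) ↔ (1 ≤ a ∧ 0 ≤ b ∧ b ≤ a ∧ 1 ≤ c ∧ 1 ≤ d ∧ d ≤ c ∧ a * d - b * c = 1) :=
  Iff.rfl

lemma stepL_mk {a b c d : ℤ} : stepL (a, b, c, d) = (a, b, a + c, b + d) := rfl
lemma stepR_mk {a b c d : ℤ} : stepR (a, b, c, d) = (a + c, b + d, c, d) := rfl

lemma good_stepL {p : Z4} (h : Good p) : Good (stepL p) := by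
  obtain ⟨a, b, c, d⟩ := p
  rw [good_mk] at h
  obtain ⟨h1, h2, h3, h4, h5, h6, h7⟩ := h
  rw [stepL_mk, good_mk]
  refine ⟨by omega, by omega, by omega, by omega, by omega, by omega, by linear_combination h7⟩

lemma good_stepR {p : Z4} (h : Good p) : Good (stepR p) := by
  obtain ⟨a, b, c, d⟩ := p
  rw [good_mk] at h
  obtain ⟨h1, h2, h3, h4, h5, h6, h7⟩ := h
  rw [stepR_mk, good_mk]
  refine ⟨by omega, by omega, by omega, by omega, by omega, by omega, by linear_combination h7⟩

lemma good_v (w : List Bool) : Good (v w) := by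
  induction w with
  | nil => exact good_mk.2 (by norm_num)
  | cons b w ih => cases b with
    | false => exact good_stepL ih
    | true => exact good_stepR ih

lemma mem_T_iff_good (p : Z4) : p ∈ T ↔ Good p := by
  obtain ⟨a, b, c, d⟩ := p
  rw [good_mk]
  constructor
  · rintro ⟨h1, h2, h3, h4, h5⟩
    dsimp only [T, Set.mem_setOf_eq] at h1 h2 h3 h4 h5
    have hbc : 0 ≤ b * c := mul_nonneg h2 (by omega)
    have had : 1 ≤ a * d := by linarith
    have ha : 1 ≤ a := by
      by_contra h
      push_neg at h
      have h' : a ≤ 0 := by omega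
      nlinarith
    have hd : 1 ≤ d := by
      by_contra h
      push_neg at h
      have h' : d ≤ 0 := by omega
      nlinarith
    exact ⟨ha, h2, h1, by omega, hd, h3, h5⟩
  · rintro ⟨h1, h2, h3, h4, h5, h6, h7⟩
    simp only [T, Set.mem_setOf_eq]
    exact ⟨h3, h2, h6, by omega, h7⟩

end SB16

namespace SB16

lemma prod4_ext {p q : Z4} (h1 : p.1 = q.1) (h2 : p.2.1 = q.2.1)
    (h3 : p.2.2.1 = q.2.2.1) (h4 : p.2.2.2 = q.2.2.2) : p = q := by
  obtain ⟨a, b, c, d⟩ := p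
  obtain ⟨a', b', c', d'⟩ := q
  simp_all

lemma v_false (w : List Bool) : v (false :: w) = stepL (v w) := rfl
lemma v_true (w : List Bool) : v (true :: w) = stepR (v w) := rfl

lemma v_inj : ∀ w₁ w₂ : List Bool, v w₁ = v w₂ → w₁ = w₂ := by
  intro w₁
  induction w₁ with
  | nil =>
    intro w₂ h
    cases w₂ with
    | nil => rfl
    | cons b w =>
      exfalso
      obtain ⟨g1, g2, g3, g4, g5, g6, g7⟩ := good_v w
      have e1 := congrArg Prod.fst h
      have e3 := congrArg (fun p : Z4 => p.2.2.1) h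
      cases b with
      | false =>
        simp only [v_false, stepL, v] at e1 e3
        omega
      | true =>
        simp only [v_true, stepR, v] at e1 e3
        omega
  | cons b₁ w₁ ih =>
    intro w₂ h
    cases w₂ with
    | nil =>
      exfalso
      obtain ⟨g1, g2, g3, g4, g5, g6, g7⟩ := good_v w₁
      have e1 := congrArg Prod.fst h
      have e3 := congrArg (fun p : Z4 => p.2.2.1) h
      cases b₁ with
      | false =>
        simp only [v_false, stepL, v] at e1 e3
        omega
      | true =>
        simp only [v_true, stepR, v] at e1 e3
        omega
    | cons b₂ w₂ =>
      obtain ⟨g1, g2, g3, g4, g5, g6, g7⟩ := good_v w₁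
      obtain ⟨k1, k2, k3, k4, k5, k6, k7⟩ := good_v w₂
      have e1 := congrArg Prod.fst h
      have e2 := congrArg (fun p : Z4 => p.2.1) h
      have e3 := congrArg (fun p : Z4 => p.2.2.1) h
      have e4 := congrArg (fun p : Z4 => p.2.2.2) h
      cases b₁ <;> cases b₂
      · simp only [v_false, stepL] at e1 e2 e3 e4
        have hv : v w₁ = v w₂ := prod4_ext e1 e2 (by omega) (by omega)
        rw [ih w₂ hv]
      · exfalso
        simp only [v_false, v_true, stepL, stepR] at e1 e3
        omega
      · exfalso
        simp only [v_false, v_true, stepL, stepR] at e1 e3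
        omega
      · simp only [v_true, stepR] at e1 e2 e3 e4
        have hv : v w₁ = v w₂ := prod4_ext (by omega) (by omega) e3 e4
        rw [ih w₂ hv]

lemma v_surj_aux : ∀ n : ℕ, ∀ p : Z4, Good p → (p.1 + p.2.2.1).toNat ≤ n → ∃ w, v w = p := by
  intro n
  induction n with
  | zero =>
    rintro ⟨a, b, c, d⟩ hp hn
    rw [good_mk] at hp
    dsimp at hn
    omega
  | succ n ih =>
    rintro ⟨a, b, c, d⟩ hp hn
    rw [good_mk] at hp
    obtain ⟨h1, h2, h3, h4, h5, h6, h7⟩ := hp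
    dsimp at hn
    rcases lt_trichotomy a c with h | h | h
    · -- p is the left child of q = (a, b, c - a, d - b)
      have hdb : 1 ≤ d - b := by
        have key : a * (d - b) = b * (c - a) + 1 := by linear_combination h7
        have hbca : 0 ≤ b * (c - a) := mul_nonneg h2 (by omega)
        by_contra hcon
        push_neg at hcon
        have hle : a * (d - b) ≤ 0 := mul_nonpos_of_nonneg_of_nonpos (by omega) (by omega)
        omega
      have hdbca : d - b ≤ c - a := by
        by_contra hcon
        push_neg at hcon
        have hN : 0 ≤ d - b - c + a - 1 := by omega
        have P1 : 0 ≤ (a - b) * (c - a) := mul_nonneg (by omega) (by omega)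
        have key : (a - b) * (c - a) + a * (d - b - c + a - 1) = 1 - a := by
          linear_combination h7
        have haN : d - b - c + a - 1 ≤ a * (d - b - c + a - 1) :=
          le_mul_of_one_le_left hN h1
        have ha1 : a = 1 := by linarith
        subst ha1
        have hP10 : (1 - b) * (c - 1) = 0 := by linarith
        rcases mul_eq_zero.1 hP10 with hb | hc
        · have hb1 : b = 1 := by omega
          have : d - b - c = 0 := by nlinarith
          omega
        · omega
      have hq : Good (a, b, c - a, d - b) := by
        rw [good_mk]
        exact ⟨h1, h2, h3, by omega, hdb, hdbca, by linear_combination h7⟩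
      obtain ⟨w, hw⟩ := ih (a, b, c - a, d - b) hq (by dsimp; omega)
      refine ⟨false :: w, ?_⟩
      rw [v_false, hw, stepL_mk, Prod.mk.injEq, Prod.mk.injEq, Prod.mk.injEq]
      refine ⟨rfl, rfl, by ring, by ring⟩
    · -- p is the root
      subst h
      have hdvd : a ∣ 1 := ⟨d - b, by linear_combination -h7⟩
      have ha1 : a = 1 := le_antisymm (Int.le_of_dvd one_pos hdvd) h1
      subst ha1
      refine ⟨[], ?_⟩
      show ((1 : ℤ), (0 : ℤ), (1 : ℤ), (1 : ℤ)) = (1, b, 1, d)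
      rw [Prod.mk.injEq, Prod.mk.injEq, Prod.mk.injEq]
      refine ⟨rfl, by omega, rfl, by omega⟩
    · -- p is the right child of q = (a - c, b - d, c, d)
      have hbd : 0 ≤ b - d := by
        have key : c * (b - d) = d * (a - c) - 1 := by linear_combination -h7
        have hge : d ≤ d * (a - c) := le_mul_of_one_le_right (by omega) (by omega)
        by_contra hcon
        push_neg at hcon
        have hle : c * (b - d) ≤ c * (-1) := mul_le_mul_of_nonneg_left (by omega) (by omega)
        omega
      have hbdac : b - d ≤ a - c := by
        have key : c * (a - c - (b - d)) = (a - c) * (c - d) + 1 := by linear_combination h7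
        have hge : 0 ≤ (a - c) * (c - d) := mul_nonneg (by omega) (by omega)
        by_contra hcon
        push_neg at hcon
        have hle : c * (a - c - (b - d)) ≤ 0 :=
          mul_nonpos_of_nonneg_of_nonpos (by omega) (by omega)
        omega
      have hq : Good (a - c, b - d, c, d) := by
        rw [good_mk]
        exact ⟨by omega, hbd, hbdac, h4, h5, h6, by linear_combination h7⟩
      obtain ⟨w, hw⟩ := ih (a - c, b - d, c, d) hq (by dsimp; omega)
      refine ⟨true :: w, ?_⟩
      rw [v_true, hw, stepR_mk, Prod.mk.injEq, Prod.mk.injEq, Prod.mk.injEq]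
      refine ⟨by ring, by ring, rfl, rfl⟩

lemma v_surj (p : Z4) (hp : Good p) : ∃ w, v w = p :=
  v_surj_aux (p.1 + p.2.2.1).toNat p hp le_rfl

noncomputable def eqv : List Bool ≃ T :=
  Equiv.ofBijective (fun w => ⟨v w, (mem_T_iff_good (v w)).2 (good_v w)⟩)
    ⟨fun w₁ w₂ h => v_inj w₁ w₂ (congrArg Subtype.val h),
     fun p => by
      obtain ⟨w, hw⟩ := v_surj p.val ((mem_T_iff_good p.val).1 p.2)
      exact ⟨w, Subtype.ext hw⟩⟩

end SB16

namespace SB16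

open Filter

noncomputable def F (p : Z4) : ℝ :=
  (1 / ((p.1 : ℝ) ^ 2 * (p.2.2.1 : ℝ) ^ 2 * ((p.1 : ℝ) + (p.2.2.1 : ℝ)) ^ 2)) *
    ((p.2.1 : ℝ) * (p.2.2.2 : ℝ) / ((p.1 : ℝ) * (p.2.2.1 : ℝ)) +
      (p.2.1 : ℝ) * ((p.2.1 : ℝ) + (p.2.2.2 : ℝ)) / ((p.1 : ℝ) * ((p.1 : ℝ) + (p.2.2.1 : ℝ))) +
      ((p.2.1 : ℝ) + (p.2.2.2 : ℝ)) * (p.2.2.2 : ℝ) / (((p.1 : ℝ) + (p.2.2.1 : ℝ)) * (p.2.2.1 : ℝ)))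

noncomputable def uu (p : Z4) : ℝ :=
  (p.2.1 : ℝ) * (p.2.2.2 : ℝ) / ((p.1 : ℝ) ^ 4 * (p.2.2.1 : ℝ) ^ 4) +
    1 / (5 * (p.1 : ℝ) ^ 5 * (p.2.2.1 : ℝ) ^ 5)

noncomputable def LL (p : Z4) : ℝ := 1 / ((p.1 : ℝ) * (p.2.2.1 : ℝ))

lemma cast_facts {a b c d : ℤ} (h : Good (a, b, c, d)) :
    (1 : ℝ) ≤ (a : ℝ) ∧ (0 : ℝ) ≤ (b : ℝ) ∧ (b : ℝ) ≤ (a : ℝ) ∧ (1 : ℝ) ≤ (c : ℝ) ∧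
      (1 : ℝ) ≤ (d : ℝ) ∧ (d : ℝ) ≤ (c : ℝ) ∧ (a : ℝ) * (d : ℝ) - (b : ℝ) * (c : ℝ) = 1 := by
  rw [good_mk] at h
  obtain ⟨h1, h2, h3, h4, h5, h6, h7⟩ := h
  refine ⟨by exact_mod_cast h1, by exact_mod_cast h2, by exact_mod_cast h3,
    by exact_mod_cast h4, by exact_mod_cast h5, by exact_mod_cast h6, ?_⟩
  exact_mod_cast h7

lemma F_eq {p : Z4} (hp : Good p) : F p = uu p - uu (stepL p) - uu (stepR p) := by
  obtain ⟨a, b, c, d⟩ := p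
  obtain ⟨h1, h2, h3, h4, h5, h6, h7⟩ := cast_facts hp
  have hA0 : (a : ℝ) ≠ 0 := by linarith
  have hC0 : (c : ℝ) ≠ 0 := by linarith
  have hAC0 : (a : ℝ) + (c : ℝ) ≠ 0 := by linarith
  have hD : (d : ℝ) = (1 + (b : ℝ) * (c : ℝ)) / (a : ℝ) := by
    field_simp
    linarith
  simp only [F, uu, stepL_mk, stepR_mk]
  push_cast
  rw [hD]
  field_simp
  ring

lemma F_nonneg {p : Z4} (hp : Good p) : 0 ≤ F p := by
  obtain ⟨a, b, c, d⟩ := p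
  obtain ⟨h1, h2, h3, h4, h5, h6, h7⟩ := cast_facts hp
  have hA0 : (0 : ℝ) ≤ (a : ℝ) := by linarith
  have hC0 : (0 : ℝ) ≤ (c : ℝ) := by linarith
  have hD0 : (0 : ℝ) ≤ (d : ℝ) := by linarith
  have hAC0 : (0 : ℝ) ≤ (a : ℝ) + (c : ℝ) := by linarith
  have hBD0 : (0 : ℝ) ≤ (b : ℝ) + (d : ℝ) := by linarith
  simp only [F]
  apply mul_nonneg
  · positivity
  · exact add_nonneg (add_nonneg
      (div_nonneg (mul_nonneg h2 hD0) (mul_nonneg hA0 hC0))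
      (div_nonneg (mul_nonneg h2 hBD0) (mul_nonneg hA0 hAC0)))
      (div_nonneg (mul_nonneg hBD0 hD0) (mul_nonneg hAC0 hC0))

lemma uu_nonneg {p : Z4} (hp : Good p) : 0 ≤ uu p := by
  obtain ⟨a, b, c, d⟩ := p
  obtain ⟨h1, h2, h3, h4, h5, h6, h7⟩ := cast_facts hp
  have hA0 : (0 : ℝ) < (a : ℝ) := by linarith
  have hC0 : (0 : ℝ) < (c : ℝ) := by linarith
  have hD0 : (0 : ℝ) ≤ (d : ℝ) := by linarith
  simp only [uu]
  apply add_nonneg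
  · exact div_nonneg (mul_nonneg h2 hD0) (by positivity)
  · exact div_nonneg zero_le_one
      (le_of_lt (mul_pos (mul_pos (by norm_num) (pow_pos hA0 5)) (pow_pos hC0 5)))

lemma LL_eq {p : Z4} (hp : Good p) : LL p = LL (stepL p) + LL (stepR p) := by
  obtain ⟨a, b, c, d⟩ := p
  obtain ⟨h1, h2, h3, h4, h5, h6, h7⟩ := cast_facts hp
  have hA0 : (a : ℝ) ≠ 0 := by linarith
  have hC0 : (c : ℝ) ≠ 0 := by linarith
  have hAC0 : (a : ℝ) + (c : ℝ) ≠ 0 := by linarith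
  simp only [LL, stepL_mk, stepR_mk]
  push_cast
  field_simp
  ring

lemma uu_le_aux {p : Z4} (hp : Good p) (n : ℕ) (hsum : (n : ℤ) + 2 ≤ p.1 + p.2.2.1) :
    uu p ≤ 8 / ((n : ℝ) + 2) ^ 2 * LL p := by
  obtain ⟨a, b, c, d⟩ := p
  dsimp at hsum
  obtain ⟨h1, h2, h3, h4, h5, h6, h7⟩ := cast_facts hp
  have hsumR : (n : ℝ) + 2 ≤ (a : ℝ) + (c : ℝ) := by exact_mod_cast hsum
  have hA0 : (0 : ℝ) < (a : ℝ) := by linarith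
  have hC0 : (0 : ℝ) < (c : ℝ) := by linarith
  have hAC1 : (1 : ℝ) ≤ (a : ℝ) * (c : ℝ) := by nlinarith
  have h2AC : (n : ℝ) + 2 ≤ 2 * ((a : ℝ) * (c : ℝ)) := by nlinarith
  have hn2 : (0 : ℝ) < (n : ℝ) + 2 := by positivity
  have hBD : (b : ℝ) * (d : ℝ) ≤ (a : ℝ) * (c : ℝ) :=
    mul_le_mul h3 h6 (by linarith) (by linarith)
  have hsq : ((n : ℝ) + 2) ^ 2 ≤ 4 * ((a : ℝ) * (c : ℝ)) ^ 2 := by nlinarith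
  simp only [uu, LL]
  have e1 : (b : ℝ) * (d : ℝ) / ((a : ℝ) ^ 4 * (c : ℝ) ^ 4) + 1 / (5 * (a : ℝ) ^ 5 * (c : ℝ) ^ 5)
      = (5 * ((b : ℝ) * (d : ℝ)) * ((a : ℝ) * (c : ℝ)) + 1) / (5 * ((a : ℝ) * (c : ℝ)) ^ 5) := by
    field_simp
  have e2 : 8 / ((n : ℝ) + 2) ^ 2 * (1 / ((a : ℝ) * (c : ℝ)))
      = 8 / (((n : ℝ) + 2) ^ 2 * ((a : ℝ) * (c : ℝ))) := by
    rw [div_mul_div_comm, mul_one]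
  rw [e1, e2, div_le_div_iff₀ (by positivity) (by positivity)]
  set X := (a : ℝ) * (c : ℝ) with hXdef
  have hX0 : (0 : ℝ) < X := by positivity
  have t1 : 5 * ((b : ℝ) * (d : ℝ)) * X + 1 ≤ 5 * X ^ 2 + 1 := by nlinarith
  have t2 : ((n : ℝ) + 2) ^ 2 * X ≤ 4 * X ^ 2 * X :=
    mul_le_mul_of_nonneg_right hsq hX0.le
  have t3 : (5 * ((b : ℝ) * (d : ℝ)) * X + 1) * (((n : ℝ) + 2) ^ 2 * X)
      ≤ (5 * X ^ 2 + 1) * (4 * X ^ 2 * X) := by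
    apply mul_le_mul t1 t2 (by positivity) (by positivity)
  have h35 : X ^ 3 ≤ X ^ 5 := pow_le_pow_right₀ hAC1 (by norm_num)
  nlinarith [t3, h35]

end SB16

namespace SB16

open Filter

def level : ℕ → Finset (List Bool)
  | 0 => {[]}
  | n + 1 => (level n).image (List.cons false) ∪ (level n).image (List.cons true)

lemma mem_level : ∀ {n : ℕ} {w : List Bool}, w ∈ level n ↔ w.length = n := by
  intro n
  induction n with
  | zero => intro w; cases w <;> simp [level]
  | succ n ih =>
    intro w
    cases w with
    | nil => simp [level]
    | cons b w =>
      cases b <;> simp [level, Finset.mem_union, Finset.mem_image, ih]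

lemma level_disjoint (n : ℕ) :
    Disjoint ((level n).image (List.cons false)) ((level n).image (List.cons true)) := by
  rw [Finset.disjoint_left]
  rintro w hw1 hw2
  simp only [Finset.mem_image] at hw1 hw2
  obtain ⟨u, _, rfl⟩ := hw1
  obtain ⟨u', _, h⟩ := hw2
  exact absurd h (by simp)

lemma sum_level_succ (f : List Bool → ℝ) (n : ℕ) :
    ∑ w ∈ level (n + 1), f w = ∑ w ∈ level n, (f (false :: w) + f (true :: w)) := by
  show ∑ w ∈ ((level n).image (List.cons false) ∪ (level n).image (List.cons true)), f w = _
  rw [Finset.sum_union (level_disjoint n),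
    Finset.sum_image (fun a _ b _ h => by simpa using h),
    Finset.sum_image (fun a _ b _ h => by simpa using h),
    ← Finset.sum_add_distrib]

lemma sum_LL_level (n : ℕ) : ∑ w ∈ level n, LL (v w) = 1 := by
  induction n with
  | zero => norm_num [level, LL, v]
  | succ n ih =>
    rw [sum_level_succ]
    rw [show ∑ w ∈ level n, (LL (v (false :: w)) + LL (v (true :: w)))
        = ∑ w ∈ level n, LL (v w) from
      Finset.sum_congr rfl fun w _ => by rw [v_false, v_true, ← LL_eq (good_v w)]]
    exact ih

lemma sum_F_level (n : ℕ) :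
    ∑ w ∈ level n, F (v w)
      = (∑ w ∈ level n, uu (v w)) - ∑ w ∈ level (n + 1), uu (v w) := by
  rw [sum_level_succ, ← Finset.sum_sub_distrib]
  refine Finset.sum_congr rfl fun w _ => ?_
  rw [v_false, v_true, F_eq (good_v w)]
  ring

def ball (n : ℕ) : Finset (List Bool) := (Finset.range n).biUnion level

lemma mem_ball {n : ℕ} {w : List Bool} : w ∈ ball n ↔ w.length < n := by
  simp only [ball, Finset.mem_biUnion, Finset.mem_range, mem_level]
  exact ⟨fun ⟨k, hk, e⟩ => e ▸ hk, fun h => ⟨_, h, rfl⟩⟩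

lemma sum_F_ball (n : ℕ) :
    ∑ w ∈ ball n, F (v w) = 1 / 5 - ∑ w ∈ level n, uu (v w) := by
  induction n with
  | zero =>
    rw [show ball 0 = ∅ from rfl]
    norm_num [level, uu, v]
  | succ n ih =>
    have hsplit : ball (n + 1) = ball n ∪ level n := by
      ext w
      simp only [Finset.mem_union, mem_ball, mem_level]
      omega
    have hdisj : Disjoint (ball n) (level n) := by
      rw [Finset.disjoint_left]
      intro w hw1 hw2
      rw [mem_ball] at hw1
      rw [mem_level] at hw2
      omega
    rw [hsplit, Finset.sum_union hdisj, ih, sum_F_level n]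
    ring

lemma sum_coords_ge (w : List Bool) : (w.length : ℤ) + 2 ≤ (v w).1 + (v w).2.2.1 := by
  induction w with
  | nil => norm_num [v]
  | cons b w ih =>
    obtain ⟨g1, g2, g3, g4, g5, g6, g7⟩ := good_v w
    cases b with
    | false =>
      rw [v_false]
      dsimp [stepL]
      push_cast
      omega
    | true =>
      rw [v_true]
      dsimp [stepR]
      push_cast
      omega

lemma sum_uu_level_le (n : ℕ) : ∑ w ∈ level n, uu (v w) ≤ 8 / ((n : ℝ) + 2) ^ 2 := by
  calc ∑ w ∈ level n, uu (v w) ≤ ∑ w ∈ level n, 8 / ((n : ℝ) + 2) ^ 2 * LL (v w) := by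
        refine Finset.sum_le_sum fun w hw => ?_
        refine uu_le_aux (good_v w) n ?_
        have := sum_coords_ge w
        rw [mem_level.1 hw] at this
        exact this
    _ = 8 / ((n : ℝ) + 2) ^ 2 * ∑ w ∈ level n, LL (v w) := by rw [Finset.mul_sum]
    _ = 8 / ((n : ℝ) + 2) ^ 2 := by rw [sum_LL_level, mul_one]

lemma sum_uu_level_nonneg (n : ℕ) : 0 ≤ ∑ w ∈ level n, uu (v w) :=
  Finset.sum_nonneg fun w _ => uu_nonneg (good_v w)

lemma tendsto_sum_uu : Tendsto (fun n : ℕ => ∑ w ∈ level n, uu (v w)) atTop (nhds 0) := by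
  have hbig : Tendsto (fun n : ℕ => ((n : ℝ) + 2) ^ 2) atTop atTop := by
    apply tendsto_atTop_mono (fun n => ?_) tendsto_natCast_atTop_atTop
    nlinarith [sq_nonneg ((n : ℝ) + 1), Nat.cast_nonneg (α := ℝ) n]
  have hbound : Tendsto (fun n : ℕ => 8 / ((n : ℝ) + 2) ^ 2) atTop (nhds 0) :=
    tendsto_const_nhds.div_atTop hbig
  exact squeeze_zero sum_uu_level_nonneg sum_uu_level_le hbound

lemma main : HasSum (fun w : List Bool => F (v w)) (1 / 5) := by
  apply hasSum_of_isLUB_of_nonneg (1 / 5) (fun w => F_nonneg (good_v w))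
  constructor
  · rintro x ⟨s, rfl⟩
    have hsub : s ⊆ ball (s.sup List.length + 1) := fun w hw => by
      rw [mem_ball]
      have := Finset.le_sup (f := List.length) hw
      omega
    calc ∑ w ∈ s, F (v w) ≤ ∑ w ∈ ball (s.sup List.length + 1), F (v w) :=
          Finset.sum_le_sum_of_subset_of_nonneg hsub fun w _ _ => F_nonneg (good_v w)
      _ = 1 / 5 - ∑ w ∈ level (s.sup List.length + 1), uu (v w) := sum_F_ball _
      _ ≤ 1 / 5 := by linarith [sum_uu_level_nonneg (s.sup List.length + 1)]
  · rintro x hx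
    have hle : ∀ n : ℕ, 1 / 5 - ∑ w ∈ level n, uu (v w) ≤ x := fun n => by
      rw [← sum_F_ball n]
      exact hx ⟨ball n, rfl⟩
    have ht : Tendsto (fun n : ℕ => 1 / 5 - ∑ w ∈ level n, uu (v w)) atTop
        (nhds (1 / 5)) := by
      simpa using tendsto_const_nhds.sub tendsto_sum_uu
    exact le_of_tendsto' ht hle

end SB16


theorem stmt_16 :
    HasSum
      (fun p : T =>
        (1 / ((p.val.1 : ℝ) ^ 2 * (p.val.2.2.1 : ℝ) ^ 2 *
            ((p.val.1 : ℝ) + (p.val.2.2.1 : ℝ)) ^ 2)) *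
          ((p.val.2.1 : ℝ) * (p.val.2.2.2 : ℝ) / ((p.val.1 : ℝ) * (p.val.2.2.1 : ℝ)) +
            (p.val.2.1 : ℝ) * ((p.val.2.1 : ℝ) + (p.val.2.2.2 : ℝ)) /
              ((p.val.1 : ℝ) * ((p.val.1 : ℝ) + (p.val.2.2.1 : ℝ))) +
            ((p.val.2.1 : ℝ) + (p.val.2.2.2 : ℝ)) * (p.val.2.2.2 : ℝ) /
              (((p.val.1 : ℝ) + (p.val.2.2.1 : ℝ)) * (p.val.2.2.1 : ℝ))))
      (1 / 5) := by
  exact (Equiv.hasSum_iff SB16.eqv).mp SB16.main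
end
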